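/- arXiv:1503.06903 — 4 statements merged into one kernel-verified Lean document; each statement's English description precedes it below -/
import Mathlib

section
/- Assume each q_i is Lipschitz continuous, let f be the bounded fractal function, and let K : ℝ × ℝ → ℝ be a kernel such that x ↦ K(x, s) is continuous and bounded on I for each fixed s. Define f̂(s) = ∫_{x_0}^{x_N} K(x, s) f(x) dx and Q̂(s) = ∫_{x_0}^{x_N} K(x, s) Q(x) dx, where Q(x) = q_i(L_i^{-1}(x)) for x ∈ I_i. Then for every s, f̂(s) = ∑_{i=1}^N a_i α_i ∫_{x_0}^{x_N} K(L_i(x), s) f(x) dx + Q̂(s). -/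
open Set

noncomputable def aC (x : ℕ → ℝ) (N i : ℕ) : ℝ := (x (i + 1) - x i) / (x N - x 0)

noncomputable def bC (x : ℕ → ℝ) (N i : ℕ) : ℝ := (x N * x i - x 0 * x (i + 1)) / (x N - x 0)

/-- The affine map `L i t = a i * t + b i`. -/
noncomputable def Lm (x : ℕ → ℝ) (N i : ℕ) (t : ℝ) : ℝ := aC x N i * t + bC x N i

/-- The inverse `L i ⁻¹ t = (t - b i) / a i` of the affine map `L i`. -/
noncomputable def LmInv (x : ℕ → ℝ) (N i : ℕ) (t : ℝ) : ℝ := (t - bC x N i) / aC x N i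


lemma bddII {a b : ℝ} {g : ℝ → ℝ} (hm : AEMeasurable g (MeasureTheory.volume.restrict (Set.uIoc a b)))
    {C : ℝ} (hb : ∀ t ∈ Set.uIoc a b, |g t| ≤ C) : IntervalIntegrable g MeasureTheory.volume a b := by
  rw [intervalIntegrable_iff]
  rw [Set.uIoc] at *
  refine ⟨hm.aestronglyMeasurable, ?_⟩
  apply MeasureTheory.HasFiniteIntegral.of_bounded (C := C)
  rw [MeasureTheory.ae_restrict_iff' measurableSet_Ioc]
  exact MeasureTheory.ae_of_all _ fun t ht => by simpa [Real.norm_eq_abs] using hb t ht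

lemma ae_ne_pt (c : ℝ) : ∀ᵐ u : ℝ ∂MeasureTheory.volume, u ≠ c := by
  have h : (MeasureTheory.volume : MeasureTheory.Measure ℝ) {c} = 0 := MeasureTheory.measure_singleton _
  rw [MeasureTheory.ae_iff]
  simpa using h

/-- Functional equation for the general integral transform
`f̂(s) = ∫ K(x,s) f(x) dx` of the bounded fractal function. -/
theorem stmt14
    (N : ℕ) (hN : 2 ≤ N)
    (x : ℕ → ℝ)
    (hx : ∀ i, i < N → x i < x (i + 1))
    (α : ℕ → ℝ) (hα : ∀ i, i < N → |α i| < 1)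
    (q : ℕ → ℝ → ℝ)
    (hq : ∀ i, i < N → ∃ C, ∀ u ∈ Icc (x 0) (x N), ∀ v ∈ Icc (x 0) (x N),
      |q i u - q i v| ≤ C * |u - v|)
    (f : ℝ → ℝ)
    (hfb : ∃ M, ∀ t ∈ Icc (x 0) (x N), |f t| ≤ M)
    (hfe : ∀ i, i < N → ∀ t ∈ Ico (x 0) (x N), f (Lm x N i t) = α i * f t + q i t)
    (hfeN : f (Lm x N (N - 1) (x N)) = α (N - 1) * f (x N) + q (N - 1) (x N))
    (Qf : ℝ → ℝ)
    (hQf : ∀ i, i < N → ∀ t ∈ Ico (x i) (x (i + 1)), Qf t = q i (LmInv x N i t))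
    (hQfN : Qf (x N) = q (N - 1) (LmInv x N (N - 1) (x N)))
    (K : ℝ → ℝ → ℝ)
    (hKc : ∀ s : ℝ, ContinuousOn (fun t => K t s) (Icc (x 0) (x N)))
    (hKb : ∀ s : ℝ, ∃ M, ∀ t ∈ Icc (x 0) (x N), |K t s| ≤ M) :
    ∀ s : ℝ,
      ∫ t in (x 0)..(x N), K t s * f t =
        (∑ i ∈ Finset.range N,
          aC x N i * α i * ∫ t in (x 0)..(x N), K (Lm x N i t) s * f t) +
        ∫ t in (x 0)..(x N), K t s * Qf t := by
  obtain ⟨M, hM⟩ := hfb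
  -- basic order facts
  have hmono : ∀ i j : ℕ, i ≤ j → j ≤ N → x i ≤ x j := by
    intro i j hij hjN
    induction j with
    | zero => simp [Nat.le_zero.mp hij]
    | succ k ih =>
      rcases Nat.lt_or_ge i (k + 1) with h | h
      · exact le_trans (ih (Nat.lt_succ_iff.mp h) (le_trans (Nat.le_succ k) hjN))
          (le_of_lt (hx k (lt_of_lt_of_le (Nat.lt_succ_self k) hjN)))
      · have : i = k + 1 := le_antisymm hij h
        simp [this]
  have hx0N : x 0 < x N := lt_of_lt_of_le (hx 0 (by omega)) (hmono 1 N (by omega) le_rfl)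
  have hM0 : 0 ≤ M := le_trans (abs_nonneg _) (hM (x 0) ⟨le_rfl, hx0N.le⟩)
  have hD : 0 < x N - x 0 := sub_pos.mpr hx0N
  have ha : ∀ i, i < N → 0 < aC x N i := fun i hi => div_pos (sub_pos.mpr (hx i hi)) hD
  have hL0 : ∀ i, i < N → Lm x N i (x 0) = x i := by
    intro i hi; unfold Lm aC bC; field_simp; ring
  have hLN : ∀ i, i < N → Lm x N i (x N) = x (i + 1) := by
    intro i hi; unfold Lm aC bC; field_simp; ring
  have hLinv : ∀ i, i < N → ∀ t, LmInv x N i (Lm x N i t) = t := by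
    intro i hi t; unfold Lm LmInv; field_simp [ne_of_gt (ha i hi)]; ring
  have hLinv' : ∀ i, i < N → ∀ t, Lm x N i (LmInv x N i t) = t := by
    intro i hi t; unfold Lm LmInv; field_simp [ne_of_gt (ha i hi)]; ring
  have hLmono : ∀ i, i < N → StrictMono (Lm x N i) := by
    intro i hi u v huv
    have h1 := ha i hi
    unfold Lm
    nlinarith
  have hpiece : ∀ i, i < N → Icc (x i) (x (i + 1)) ⊆ Icc (x 0) (x N) := fun i hi =>
    Icc_subset_Icc (hmono 0 i (Nat.zero_le _) (le_of_lt hi)) (hmono (i + 1) N hi le_rfl)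
  have hLmem : ∀ i, i < N → ∀ u ∈ Icc (x 0) (x N), Lm x N i u ∈ Icc (x i) (x (i + 1)) := by
    intro i hi u hu
    exact ⟨(hL0 i hi) ▸ (hLmono i hi).monotone hu.1, (hLN i hi) ▸ (hLmono i hi).monotone hu.2⟩
  have hLmemo : ∀ i, i < N → ∀ u ∈ Ioo (x 0) (x N), Lm x N i u ∈ Ioo (x i) (x (i + 1)) := by
    intro i hi u hu
    exact ⟨(hL0 i hi) ▸ (hLmono i hi) hu.1, (hLN i hi) ▸ (hLmono i hi) hu.2⟩
  have hInvmem : ∀ i, i < N → ∀ t ∈ Ico (x i) (x (i + 1)), LmInv x N i t ∈ Ico (x 0) (x N) := by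
    intro i hi t ht
    have hu : Lm x N i (LmInv x N i t) = t := hLinv' i hi t
    constructor
    · by_contra h
      push_neg at h
      have := (hLmono i hi) h
      rw [hu, hL0 i hi] at this
      exact absurd ht.1 (not_le.mpr this)
    · by_contra h
      push_neg at h
      have := (hLmono i hi).monotone h
      rw [hu, hLN i hi] at this
      exact absurd ht.2 (not_lt.mpr this)
  have hInvMono : ∀ i, i < N → Monotone (LmInv x N i) := by
    intro i hi u v huv
    unfold LmInv
    exact div_le_div_of_nonneg_right (sub_le_sub_right huv _) (ha i hi).le
  have hInvL0 : ∀ i, i < N → LmInv x N i (x i) = x 0 := by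
    intro i hi
    rw [← hL0 i hi, hLinv i hi]
  have hInvLN : ∀ i, i < N → LmInv x N i (x (i + 1)) = x N := by
    intro i hi
    rw [← hLN i hi, hLinv i hi]
  have hInvmemIcc : ∀ i, i < N → ∀ t ∈ Icc (x i) (x (i + 1)), LmInv x N i t ∈ Icc (x 0) (x N) := by
    intro i hi t ht
    exact ⟨(hInvL0 i hi) ▸ hInvMono i hi ht.1, (hInvLN i hi) ▸ hInvMono i hi ht.2⟩
  -- continuity of the q i on Icc
  have hqcont : ∀ i, i < N → ContinuousOn (q i) (Icc (x 0) (x N)) := by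
    intro i hi
    obtain ⟨C, hC⟩ := hq i hi
    apply LipschitzOnWith.continuousOn (K := Real.toNNReal C)
    rw [lipschitzOnWith_iff_dist_le_mul]
    intro u hu v hv
    rw [Real.dist_eq, Real.dist_eq]
    calc |q i u - q i v| ≤ C * |u - v| := hC u hu v hv
      _ ≤ Real.toNNReal C * |u - v| :=
        mul_le_mul_of_nonneg_right (Real.le_coe_toNNReal C) (abs_nonneg _)
  -- clamped versions of q i, continuous on all of ℝ
  set cl : ℝ → ℝ := fun t => max (x 0) (min (x N) t) with hcl
  have hclcont : Continuous cl := continuous_const.max (continuous_const.min continuous_id)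
  have hclmem : ∀ t, cl t ∈ Icc (x 0) (x N) := fun t =>
    ⟨le_max_left _ _, max_le hx0N.le (min_le_left _ _)⟩
  set qc : ℕ → ℝ → ℝ := fun i t => q i (cl t) with hqcdef
  have hqcc : ∀ i, i < N → Continuous (qc i) := fun i hi =>
    (hqcont i hi).comp_continuous hclcont hclmem
  have hqcq : ∀ i, ∀ t ∈ Icc (x 0) (x N), qc i t = q i t := by
    intro i t ht
    simp only [hqcdef, hcl]
    rw [min_eq_right ht.2, max_eq_right ht.1]
  have hLInvCont : ∀ i, Continuous (LmInv x N i) := fun i =>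
    (continuous_id.sub continuous_const).div_const _
  -- the approximation operator
  set Tm : (ℝ → ℝ) → ℝ → ℝ := fun g t =>
    (∑ i ∈ Finset.range N, Set.indicator (Ico (x i) (x (i + 1)))
      (fun u => α i * g (LmInv x N i u) + qc i (LmInv x N i u)) t)
    + Set.indicator {x N}
      (fun u => α (N - 1) * g (LmInv x N (N - 1) u) + qc (N - 1) (LmInv x N (N - 1) u)) t
    with hTmdef
  have hTmMeas : ∀ g : ℝ → ℝ, Measurable g → Measurable (Tm g) := by
    intro g hg
    apply Measurable.add
    · apply Finset.measurable_sum
      intro i hi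
      apply Measurable.indicator _ measurableSet_Ico
      exact ((hg.comp (hLInvCont i).measurable).const_mul _).add
        (((hqcc i (Finset.mem_range.mp hi)).comp (hLInvCont i)).measurable)
    · apply Measurable.indicator _ (measurableSet_singleton _)
      exact ((hg.comp (hLInvCont _).measurable).const_mul _).add
        (((hqcc (N - 1) (by omega)).comp (hLInvCont _)).measurable)
  have hTm0 : ∀ g : ℝ → ℝ, ∀ t, t ∉ Icc (x 0) (x N) → Tm g t = 0 := by
    intro g t ht
    rw [hTmdef]
    simp only
    rw [Finset.sum_eq_zero, Set.indicator_of_notMem, add_zero]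
    · intro h
      rw [mem_singleton_iff] at h
      exact ht (by rw [h]; exact ⟨hx0N.le, le_rfl⟩)
    · intro i hi
      apply Set.indicator_of_notMem
      intro hmem
      exact ht (hpiece i (Finset.mem_range.mp hi) (Ico_subset_Icc_self hmem))
  -- covering
  have hcover : ∀ t ∈ Ico (x 0) (x N), ∃ i, i < N ∧ t ∈ Ico (x i) (x (i + 1)) := by
    intro t ht
    have key : ∀ n, n ≤ N → t < x n → ∃ i, i < n ∧ t ∈ Ico (x i) (x (i + 1)) := by
      intro n
      induction n with
      | zero => exact fun _ h => absurd h (not_lt.mpr ht.1)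
      | succ k ih =>
        intro hkN hlt
        by_cases hk : x k ≤ t
        · exact ⟨k, Nat.lt_succ_self k, hk, hlt⟩
        · obtain ⟨i, hi, hmem⟩ := ih (le_trans (Nat.le_succ k) hkN) (lt_of_not_ge hk)
          exact ⟨i, lt_trans hi (Nat.lt_succ_self k), hmem⟩
    exact key N le_rfl ht.2
  -- structure of Tm and f on Icc
  have hTmIcc : ∀ g : ℝ → ℝ, ∀ t ∈ Icc (x 0) (x N), ∃ j, j < N ∧
      LmInv x N j t ∈ Icc (x 0) (x N) ∧
      Tm g t = α j * g (LmInv x N j t) + q j (LmInv x N j t) ∧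
      f t = α j * f (LmInv x N j t) + q j (LmInv x N j t) := by
    intro g t ht
    by_cases htN : t = x N
    · refine ⟨N - 1, by omega, ?_, ?_, ?_⟩
      all_goals
        have hNN : Lm x N (N - 1) (x N) = x N := by
          have h := hLN (N - 1) (by omega)
          rwa [show N - 1 + 1 = N by omega] at h
      all_goals
        have hinv : LmInv x N (N - 1) t = x N := by
          rw [htN]
          have h2 := hLinv (N - 1) (by omega) (x N)
          rwa [hNN] at h2
      · rw [hinv]; exact ⟨hx0N.le, le_rfl⟩
      · rw [hTmdef]
        simp only
        rw [Finset.sum_eq_zero, Set.indicator_of_mem (by rw [htN]; exact rfl), zero_add, hinv,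
          hqcq _ _ ⟨hx0N.le, le_rfl⟩]
        intro i hi
        apply Set.indicator_of_notMem
        intro hmem
        have : x (i + 1) ≤ x N := hmono (i + 1) N (Finset.mem_range.mp hi) le_rfl
        rw [htN] at hmem
        exact absurd hmem.2 (not_lt.mpr this)
      · rw [hinv, htN]
        calc f (x N) = f (Lm x N (N - 1) (x N)) := by rw [hNN]
          _ = α (N - 1) * f (x N) + q (N - 1) (x N) := hfeN
    · have htIco : t ∈ Ico (x 0) (x N) := ⟨ht.1, lt_of_le_of_ne ht.2 htN⟩
      obtain ⟨j, hj, hmem⟩ := hcover t htIco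
      have hu := hInvmem j hj t hmem
      refine ⟨j, hj, Ico_subset_Icc_self hu, ?_, ?_⟩
      · rw [hTmdef]
        simp only
        rw [Set.indicator_of_notMem (by simpa [mem_singleton_iff] using htN), add_zero]
        rw [Finset.sum_eq_single_of_mem j (Finset.mem_range.mpr hj)]
        · rw [Set.indicator_of_mem hmem, hqcq _ _ (Ico_subset_Icc_self hu)]
        · intro i hi hne
          apply Set.indicator_of_notMem
          intro hmemi
          rcases lt_or_gt_of_ne hne with h | h
          · have : x (i + 1) ≤ x j := hmono (i + 1) j h (hj.le)
            exact absurd hmem.1 (not_le.mpr (lt_of_lt_of_le hmemi.2 this))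
          · have : x (j + 1) ≤ x i := hmono (j + 1) i h (Finset.mem_range.mp hi).le
            exact absurd hmemi.1 (not_le.mpr (lt_of_lt_of_le hmem.2 this))
      · conv_lhs => rw [← hLinv' j hj t]
        exact hfe j hj _ hu
  -- contraction constant
  have hNne : (Finset.range N).Nonempty := ⟨0, Finset.mem_range.mpr (by omega)⟩
  set A : ℝ := (Finset.range N).sup' hNne (fun i => |α i|) with hA
  have hA0 : 0 ≤ A := le_trans (abs_nonneg (α 0)) (Finset.le_sup' (fun i => |α i|) (Finset.mem_range.mpr (show 0 < N by omega)))
  have hA1 : A < 1 := by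
    rw [hA, Finset.sup'_lt_iff]
    intro i hi
    exact hα i (Finset.mem_range.mp hi)
  have hAle : ∀ j, j < N → |α j| ≤ A := by
    intro j hj
    rw [hA]
    exact Finset.le_sup' (fun i => |α i|) (Finset.mem_range.mpr hj)
  -- the iterates
  set gseq : ℕ → ℝ → ℝ := fun n => Tm^[n] (fun _ => 0) with hgseq
  have hgseqS : ∀ n, gseq (n + 1) = Tm (gseq n) := fun n => Function.iterate_succ_apply' Tm n _
  have hgmeas : ∀ n, Measurable (gseq n) := by
    intro n
    induction n with
    | zero => exact measurable_const
    | succ k ih => rw [hgseqS]; exact hTmMeas _ ih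
  have hbound : ∀ n, ∀ t ∈ Icc (x 0) (x N), |f t - gseq n t| ≤ A ^ n * M := by
    intro n
    induction n with
    | zero => intro t ht; rw [hgseq]; simpa using hM t ht
    | succ n ih =>
      intro t ht
      obtain ⟨j, hj, humem, hTval, hfval⟩ := hTmIcc (gseq n) t ht
      rw [hgseqS, hTval, hfval]
      have heq : α j * f (LmInv x N j t) + q j (LmInv x N j t) -
          (α j * gseq n (LmInv x N j t) + q j (LmInv x N j t)) =
          α j * (f (LmInv x N j t) - gseq n (LmInv x N j t)) := by ring
      rw [heq, abs_mul]
      calc |α j| * |f (LmInv x N j t) - gseq n (LmInv x N j t)| ≤ A * (A ^ n * M) :=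
          mul_le_mul (hAle j hj) (ih _ humem) (abs_nonneg _) hA0
        _ = A ^ (n + 1) * M := by ring
  set fI : ℝ → ℝ := Set.indicator (Icc (x 0) (x N)) f with hfIdef
  have hfImem : ∀ t ∈ Icc (x 0) (x N), fI t = f t := fun t ht => Set.indicator_of_mem ht f
  have hfIbound : ∀ t, |fI t| ≤ M := by
    intro t
    by_cases h : t ∈ Icc (x 0) (x N)
    · rw [hfImem t h]; exact hM t h
    · rw [hfIdef, Set.indicator_of_notMem h]; simpa using hM0
  have hfItend : ∀ t, Filter.Tendsto (fun n => gseq n t) Filter.atTop (nhds (fI t)) := by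
    intro t
    by_cases ht : t ∈ Icc (x 0) (x N)
    · rw [hfImem t ht]
      rw [tendsto_iff_dist_tendsto_zero]
      have h0 : Filter.Tendsto (fun n : ℕ => A ^ n * M) Filter.atTop (nhds 0) := by
        simpa using (tendsto_pow_atTop_nhds_zero_of_lt_one hA0 hA1).mul_const M
      exact squeeze_zero (fun n => dist_nonneg)
        (fun n => by rw [Real.dist_eq, abs_sub_comm]; exact hbound n t ht) h0
    · have hz : ∀ n, 1 ≤ n → gseq n t = fI t := by
        intro n hn
        obtain ⟨m, rfl⟩ := Nat.exists_eq_add_of_le hn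
        rw [show 1 + m = m + 1 by ring, hgseqS, hTm0 _ t ht, hfIdef, Set.indicator_of_notMem ht]
      exact tendsto_atTop_of_eventually_const hz
  have hfImeas : Measurable fI :=
    measurable_of_tendsto_metrizable' Filter.atTop hgmeas (tendsto_pi_nhds.mpr hfItend)
  -- now the integration argument
  intro s
  obtain ⟨MK, hMK⟩ := hKb s
  have hMK0 : 0 ≤ MK := le_trans (abs_nonneg _) (hMK (x 0) ⟨le_rfl, hx0N.le⟩)
  have hLcont : ∀ i, Continuous (Lm x N i) := fun i =>
    (continuous_const.mul continuous_id).add continuous_const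
  have hKL : ∀ i, i < N → ContinuousOn (fun u => K (Lm x N i u) s) (Icc (x 0) (x N)) := by
    intro i hi
    exact (hKc s).comp (hLcont i).continuousOn (fun u hu => hpiece i hi (hLmem i hi u hu))
  have hIoc : uIoc (x 0) (x N) = Ioc (x 0) (x N) := uIoc_of_le hx0N.le
  have hsubI : uIoc (x 0) (x N) ⊆ Icc (x 0) (x N) := by rw [hIoc]; exact Ioc_subset_Icc_self
  have hIocp : ∀ i, i < N → uIoc (x i) (x (i + 1)) = Ioc (x i) (x (i + 1)) := fun i hi =>
    uIoc_of_le (hx i hi).le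
  have hsubIp : ∀ i, i < N → uIoc (x i) (x (i + 1)) ⊆ Icc (x 0) (x N) := by
    intro i hi
    rw [hIocp i hi]
    exact subset_trans Ioc_subset_Icc_self (hpiece i hi)
  have II1 : ∀ i, i < N →
      IntervalIntegrable (fun u => K (Lm x N i u) s * fI u) MeasureTheory.volume (x 0) (x N) := by
    intro i hi
    apply bddII (C := MK * M)
    · exact (((hKL i hi).mono hsubI).aemeasurable measurableSet_uIoc).mul hfImeas.aemeasurable
    · intro t ht
      rw [abs_mul]
      exact mul_le_mul (hMK _ (hpiece i hi (hLmem i hi t (hsubI ht)))) (hfIbound t)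
        (abs_nonneg _) hMK0
  have IIKfIp : ∀ i, i < N →
      IntervalIntegrable (fun t => K t s * fI t) MeasureTheory.volume (x i) (x (i + 1)) := by
    intro i hi
    apply bddII (C := MK * M)
    · exact (((hKc s).mono (hsubIp i hi)).aemeasurable measurableSet_uIoc).mul hfImeas.aemeasurable
    · intro t ht
      rw [abs_mul]
      exact mul_le_mul (hMK _ (hsubIp i hi ht)) (hfIbound t) (abs_nonneg _) hMK0
  have haeN : ∀ᵐ u : ℝ ∂MeasureTheory.volume, u ≠ x N := ae_ne_pt (x N)
  have haeid : ∀ i, i < N → ∀ u ∈ Ioo (x 0) (x N),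
      K (Lm x N i u) s * fI (Lm x N i u) =
        α i * (K (Lm x N i u) s * fI u) + K (Lm x N i u) s * Qf (Lm x N i u) := by
    intro i hi u hu
    have hLu := hLmemo i hi u hu
    have hLuI : Lm x N i u ∈ Icc (x 0) (x N) := hpiece i hi (Ioo_subset_Icc_self hLu)
    have huI : u ∈ Ico (x 0) (x N) := Ioo_subset_Ico_self hu
    have h1 : fI (Lm x N i u) = α i * fI u + q i u := by
      rw [hfImem _ hLuI, hfImem u (Ico_subset_Icc_self huI)]
      exact hfe i hi u huI
    have h2 : Qf (Lm x N i u) = q i u := by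
      rw [hQf i hi _ (Ioo_subset_Ico_self hLu), hLinv i hi]
    rw [h1, h2]
    ring
  have hae' : ∀ i, i < N → ∀ᵐ u : ℝ ∂MeasureTheory.volume, u ∈ uIoc (x 0) (x N) →
      K (Lm x N i u) s * fI (Lm x N i u) =
        α i * (K (Lm x N i u) s * fI u) + K (Lm x N i u) s * Qf (Lm x N i u) := by
    intro i hi
    filter_upwards [haeN] with u hne hu
    rw [hIoc] at hu
    exact haeid i hi u ⟨hu.1, lt_of_le_of_ne hu.2 hne⟩
  have IIq : ∀ i, i < N →
      IntervalIntegrable (fun u => K (Lm x N i u) s * Qf (Lm x N i u))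
        MeasureTheory.volume (x 0) (x N) := by
    intro i hi
    have hcont : ContinuousOn (fun u => K (Lm x N i u) s * q i u) (Icc (x 0) (x N)) :=
      (hKL i hi).mul (hqcont i hi)
    have hbase : IntervalIntegrable (fun u => K (Lm x N i u) s * q i u)
        MeasureTheory.volume (x 0) (x N) :=
      ContinuousOn.intervalIntegrable (by rwa [uIcc_of_le hx0N.le])
    rw [intervalIntegrable_iff] at hbase ⊢
    apply hbase.congr
    filter_upwards [haeN.filter_mono
        (MeasureTheory.ae_mono MeasureTheory.Measure.restrict_le_self),
      MeasureTheory.ae_restrict_mem measurableSet_uIoc] with u hne hu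
    rw [hIoc] at hu
    have huo : u ∈ Ioo (x 0) (x N) := ⟨hu.1, lt_of_le_of_ne hu.2 hne⟩
    have hLu := hLmemo i hi u huo
    rw [hQf i hi _ (Ioo_subset_Ico_self hLu), hLinv i hi]
  have IIQfp : ∀ i, i < N →
      IntervalIntegrable (fun t => K t s * Qf t) MeasureTheory.volume (x i) (x (i + 1)) := by
    intro i hi
    have hcont : ContinuousOn (fun t => K t s * q i (LmInv x N i t)) (Icc (x i) (x (i + 1))) :=
      ((hKc s).mono (hpiece i hi)).mul
        ((hqcont i hi).comp (hLInvCont i).continuousOn (hInvmemIcc i hi))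
    have hbase : IntervalIntegrable (fun t => K t s * q i (LmInv x N i t))
        MeasureTheory.volume (x i) (x (i + 1)) :=
      ContinuousOn.intervalIntegrable (by rwa [uIcc_of_le (hx i hi).le])
    rw [intervalIntegrable_iff] at hbase ⊢
    apply hbase.congr
    filter_upwards [(ae_ne_pt (x (i + 1))).filter_mono
        (MeasureTheory.ae_mono MeasureTheory.Measure.restrict_le_self),
      MeasureTheory.ae_restrict_mem measurableSet_uIoc] with t hne ht
    rw [hIocp i hi] at ht
    rw [hQf i hi t ⟨ht.1.le, lt_of_le_of_ne ht.2 hne⟩]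
  have hcov : ∀ (h : ℝ → ℝ), ∀ i, i < N →
      aC x N i * ∫ u in (x 0)..(x N), h (Lm x N i u) = ∫ t in (x i)..(x (i + 1)), h t := by
    intro h i hi
    have hkey := intervalIntegral.smul_integral_comp_mul_add (a := x 0) (b := x N) (f := h)
      (aC x N i) (bC x N i)
    rw [smul_eq_mul] at hkey
    calc aC x N i * ∫ u in (x 0)..(x N), h (Lm x N i u)
        = aC x N i * ∫ u in (x 0)..(x N), h (aC x N i * u + bC x N i) := rfl
      _ = ∫ t in (aC x N i * x 0 + bC x N i)..(aC x N i * x N + bC x N i), h t := hkey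
      _ = ∫ t in (x i)..(x (i + 1)), h t := by
          rw [show aC x N i * x 0 + bC x N i = x i from hL0 i hi,
            show aC x N i * x N + bC x N i = x (i + 1) from hLN i hi]
  have key : ∀ i ∈ Finset.range N,
      ∫ t in (x i)..(x (i + 1)), K t s * fI t =
        aC x N i * α i * (∫ u in (x 0)..(x N), K (Lm x N i u) s * fI u) +
        ∫ t in (x i)..(x (i + 1)), K t s * Qf t := by
    intro i hmemr
    have hi := Finset.mem_range.mp hmemr
    have h1 : ∫ t in (x i)..(x (i + 1)), K t s * fI t
        = aC x N i * ∫ u in (x 0)..(x N), K (Lm x N i u) s * fI (Lm x N i u) :=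
      (hcov (fun t => K t s * fI t) i hi).symm
    have h2 : ∫ u in (x 0)..(x N), K (Lm x N i u) s * fI (Lm x N i u)
        = ∫ u in (x 0)..(x N),
            (α i * (K (Lm x N i u) s * fI u) + K (Lm x N i u) s * Qf (Lm x N i u)) :=
      intervalIntegral.integral_congr_ae (hae' i hi)
    have h3 : ∫ u in (x 0)..(x N),
          (α i * (K (Lm x N i u) s * fI u) + K (Lm x N i u) s * Qf (Lm x N i u))
        = α i * (∫ u in (x 0)..(x N), K (Lm x N i u) s * fI u) +
          ∫ u in (x 0)..(x N), K (Lm x N i u) s * Qf (Lm x N i u) := by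
      rw [intervalIntegral.integral_add ((II1 i hi).const_mul (α i)) (IIq i hi),
        intervalIntegral.integral_const_mul]
    have h4 : aC x N i * ∫ u in (x 0)..(x N), K (Lm x N i u) s * Qf (Lm x N i u)
        = ∫ t in (x i)..(x (i + 1)), K t s * Qf t :=
      hcov (fun t => K t s * Qf t) i hi
    rw [h1, h2, h3, mul_add, ← mul_assoc, h4]
  have hEq1 : EqOn (fun t => K t s * f t) (fun t => K t s * fI t) (uIcc (x 0) (x N)) := by
    intro t ht
    rw [uIcc_of_le hx0N.le] at ht
    simp only
    rw [hfImem t ht]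
  calc (∫ t in (x 0)..(x N), K t s * f t)
      = ∫ t in (x 0)..(x N), K t s * fI t := intervalIntegral.integral_congr hEq1
    _ = ∑ i ∈ Finset.range N, ∫ t in (x i)..(x (i + 1)), K t s * fI t :=
        (intervalIntegral.sum_integral_adjacent_intervals (fun k hk => IIKfIp k hk)).symm
    _ = ∑ i ∈ Finset.range N, (aC x N i * α i *
          (∫ u in (x 0)..(x N), K (Lm x N i u) s * fI u) +
          ∫ t in (x i)..(x (i + 1)), K t s * Qf t) := Finset.sum_congr rfl key
    _ = (∑ i ∈ Finset.range N, aC x N i * α i *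
          (∫ u in (x 0)..(x N), K (Lm x N i u) s * fI u)) +
        ∑ i ∈ Finset.range N, ∫ t in (x i)..(x (i + 1)), K t s * Qf t := Finset.sum_add_distrib
    _ = (∑ i ∈ Finset.range N,
          aC x N i * α i * ∫ t in (x 0)..(x N), K (Lm x N i t) s * f t) +
        ∫ t in (x 0)..(x N), K t s * Qf t := by
        rw [intervalIntegral.sum_integral_adjacent_intervals (fun k hk => IIQfp k hk)]
        congr 1
        apply Finset.sum_congr rfl
        intro i _
        congr 1
        apply intervalIntegral.integral_congr
        intro u hu
        rw [uIcc_of_le hx0N.le] at hu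
        simp only
        rw [hfImem u hu]
end

section
/- Assume each q_i is Lipschitz continuous and let f be the bounded fractal function. Define the Laplace-type transform f̂(s) = ∫_{x_0}^{x_N} e^{−sx} f(x) dx and Q̂(s) = ∫_{x_0}^{x_N} e^{−sx} Q(x) dx, where Q(x) = q_i(L_i^{-1}(x)) for x ∈ I_i. Then for every real s, f̂(s) = ∑_{i=1}^N a_i α_i e^{−s b_i} f̂(a_i s) + Q̂(s). -/
open Set

section Aux

lemma x_mono (x : ℕ → ℝ) (N : ℕ) (hx : ∀ i, i < N → x i < x (i + 1))
    {i j : ℕ} (hij : i ≤ j) (hj : j ≤ N) : x i ≤ x j := by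
  induction j with
  | zero => simp [Nat.le_zero.mp hij]
  | succ k ih =>
    rcases Nat.lt_or_ge i (k + 1) with h | h
    · exact (ih (Nat.lt_succ_iff.mp h) (by omega)).trans (hx k (by omega)).le
    · have : i = k + 1 := le_antisymm hij h
      simp [this]

lemma x0_lt_xN (x : ℕ → ℝ) (N : ℕ) (hN : 2 ≤ N) (hx : ∀ i, i < N → x i < x (i + 1)) :
    x 0 < x N := by
  have h1 : x 0 < x 1 := hx 0 (by omega)
  have h2 : x 1 ≤ x N := x_mono x N hx (by omega) le_rfl
  linarith

lemma aC_pos (x : ℕ → ℝ) (N : ℕ) (hN : 2 ≤ N) (hx : ∀ i, i < N → x i < x (i + 1))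
    {i : ℕ} (hi : i < N) : 0 < aC x N i :=
  div_pos (sub_pos.2 (hx i hi)) (sub_pos.2 (x0_lt_xN x N hN hx))

lemma Lm_left (x : ℕ → ℝ) (N : ℕ) (hN : 2 ≤ N) (hx : ∀ i, i < N → x i < x (i + 1))
    (i : ℕ) : aC x N i * x 0 + bC x N i = x i := by
  have hd : x N - x 0 ≠ 0 := (sub_pos.2 (x0_lt_xN x N hN hx)).ne'
  unfold aC bC
  field_simp
  ring

lemma Lm_right (x : ℕ → ℝ) (N : ℕ) (hN : 2 ≤ N) (hx : ∀ i, i < N → x i < x (i + 1))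
    (i : ℕ) : aC x N i * x N + bC x N i = x (i + 1) := by
  have hd : x N - x 0 ≠ 0 := (sub_pos.2 (x0_lt_xN x N hN hx)).ne'
  unfold aC bC
  field_simp
  ring

lemma LmInv_Lm (x : ℕ → ℝ) (N i : ℕ) (ha : aC x N i ≠ 0) (t : ℝ) :
    LmInv x N i (Lm x N i t) = t := by
  unfold Lm LmInv; field_simp; ring

lemma Lm_LmInv (x : ℕ → ℝ) (N i : ℕ) (ha : aC x N i ≠ 0) (t : ℝ) :
    Lm x N i (LmInv x N i t) = t := by
  unfold Lm LmInv; field_simp; ring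

lemma LmInv_mem (x : ℕ → ℝ) (N : ℕ) (hN : 2 ≤ N) (hx : ∀ i, i < N → x i < x (i + 1))
    {i : ℕ} (hi : i < N) {t : ℝ} (ht : t ∈ Ico (x i) (x (i + 1))) :
    LmInv x N i t ∈ Ico (x 0) (x N) := by
  have ha := aC_pos x N hN hx hi
  have h0 := Lm_left x N hN hx i
  have h1 := Lm_right x N hN hx i
  constructor
  · rw [LmInv, le_div_iff₀ ha]
    nlinarith [ht.1]
  · rw [LmInv, div_lt_iff₀ ha]
    nlinarith [ht.2]

lemma LmInv_mem_Icc (x : ℕ → ℝ) (N : ℕ) (hN : 2 ≤ N) (hx : ∀ i, i < N → x i < x (i + 1))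
    {i : ℕ} (hi : i < N) {t : ℝ} (ht : t ∈ Icc (x i) (x (i + 1))) :
    LmInv x N i t ∈ Icc (x 0) (x N) := by
  have ha := aC_pos x N hN hx hi
  have h0 := Lm_left x N hN hx i
  have h1 := Lm_right x N hN hx i
  constructor
  · rw [LmInv, le_div_iff₀ ha]
    nlinarith [ht.1]
  · rw [LmInv, div_le_iff₀ ha]
    nlinarith [ht.2]

/-- Clamp to `[x 0, x N]`. -/
noncomputable def clampI (x : ℕ → ℝ) (N : ℕ) (t : ℝ) : ℝ := max (x 0) (min t (x N))

lemma clampI_mem (x : ℕ → ℝ) (N : ℕ) (h : x 0 ≤ x N) (t : ℝ) :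
    clampI x N t ∈ Icc (x 0) (x N) :=
  ⟨le_max_left _ _, max_le h (min_le_right _ _)⟩

lemma clampI_eq (x : ℕ → ℝ) (N : ℕ) {t : ℝ} (ht : t ∈ Icc (x 0) (x N)) :
    clampI x N t = t := by
  rw [clampI, min_eq_left ht.2, max_eq_right ht.1]

lemma clampI_lip (x : ℕ → ℝ) (N : ℕ) (s t : ℝ) :
    |clampI x N s - clampI x N t| ≤ |s - t| := by
  have h1 : |max (x 0) (min s (x N)) - max (x 0) (min t (x N))| ≤ |min s (x N) - min t (x N)| := by
    rw [max_comm (x 0) _, max_comm (x 0) _]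
    exact abs_max_sub_max_le_abs _ _ _
  have h2 := abs_min_sub_min_le_max s (x N) t (x N)
  rw [sub_self, abs_zero, max_eq_left (abs_nonneg _)] at h2
  exact h1.trans h2

/-- Piecewise index-dependent sums of indicators. -/
noncomputable def Afn (x : ℕ → ℝ) (N : ℕ) (α : ℕ → ℝ) (t : ℝ) : ℝ :=
  ∑ i ∈ Finset.range N, (Ico (x i) (x (i + 1))).indicator (fun _ => α i) t

noncomputable def Sfn (x : ℕ → ℝ) (N : ℕ) (t : ℝ) : ℝ :=
  ∑ i ∈ Finset.range N, (Ico (x i) (x (i + 1))).indicator (LmInv x N i) t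

noncomputable def Qfn (x : ℕ → ℝ) (N : ℕ) (q : ℕ → ℝ → ℝ) (t : ℝ) : ℝ :=
  ∑ i ∈ Finset.range N,
    (Ico (x i) (x (i + 1))).indicator (fun u => q i (clampI x N (LmInv x N i u))) t

noncomputable def gfn (x : ℕ → ℝ) (N : ℕ) (α : ℕ → ℝ) (q : ℕ → ℝ → ℝ) : ℕ → ℝ → ℝ
  | 0 => fun _ => 0
  | n + 1 => fun t => Afn x N α t * gfn x N α q n (Sfn x N t) + Qfn x N q t

lemma indicator_sum_eval (x : ℕ → ℝ) (N : ℕ) (hx : ∀ i, i < N → x i < x (i + 1))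
    {j : ℕ} (hj : j < N) {t : ℝ} (ht : t ∈ Ico (x j) (x (j + 1))) (g : ℕ → ℝ → ℝ) :
    (∑ i ∈ Finset.range N, (Ico (x i) (x (i + 1))).indicator (g i) t) = g j t := by
  rw [Finset.sum_eq_single_of_mem j (Finset.mem_range.2 hj)]
  · exact indicator_of_mem ht (g j)
  · intro i hi hij
    apply indicator_of_notMem
    rcases lt_or_gt_of_ne hij with h | h
    · intro hmem
      have : x (i + 1) ≤ x j := x_mono x N hx h hj.le
      exact absurd hmem.2 (not_lt.2 (this.trans ht.1))
    · intro hmem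
      have : x (j + 1) ≤ x i := x_mono x N hx h (Finset.mem_range.1 hi).le
      exact absurd hmem.1 (not_le.2 (lt_of_lt_of_le ht.2 this))

lemma exists_piece (x : ℕ → ℝ) (N : ℕ) (hN : 2 ≤ N) (hx : ∀ i, i < N → x i < x (i + 1))
    {t : ℝ} (ht : t ∈ Ico (x 0) (x N)) :
    ∃ j, j < N ∧ t ∈ Ico (x j) (x (j + 1)) := by
  classical
  set P : ℕ → Prop := fun i => x i ≤ t with hP
  have hP0 : P 0 := ht.1
  have hjle : Nat.findGreatest P (N - 1) ≤ N - 1 := Nat.findGreatest_le _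
  have hjN : Nat.findGreatest P (N - 1) < N := lt_of_le_of_lt hjle (by omega)
  refine ⟨Nat.findGreatest P (N - 1), hjN,
    Nat.findGreatest_spec (Nat.zero_le _) hP0, ?_⟩
  by_cases hje : Nat.findGreatest P (N - 1) = N - 1
  · rw [hje, show N - 1 + 1 = N by omega]
    exact ht.2
  · have hlt : Nat.findGreatest P (N - 1) < N - 1 := lt_of_le_of_ne hjle hje
    have h2 : ¬ P (Nat.findGreatest P (N - 1) + 1) :=
      Nat.findGreatest_is_greatest (Nat.lt_succ_self _) (Nat.succ_le_of_lt hlt)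
    exact not_le.mp h2

end Aux

/-- Functional equation for the Laplace-type transform of the bounded fractal function:
`f̂(s) = ∑ i a i α i e^{-s b i} f̂(a i s) + Q̂(s)`. -/
theorem stmt15
    (N : ℕ) (hN : 2 ≤ N)
    (x : ℕ → ℝ)
    (hx : ∀ i, i < N → x i < x (i + 1))
    (α : ℕ → ℝ) (hα : ∀ i, i < N → |α i| < 1)
    (q : ℕ → ℝ → ℝ)
    (hq : ∀ i, i < N → ∃ C, ∀ u ∈ Icc (x 0) (x N), ∀ v ∈ Icc (x 0) (x N),
      |q i u - q i v| ≤ C * |u - v|)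
    (f : ℝ → ℝ)
    (hfb : ∃ M, ∀ t ∈ Icc (x 0) (x N), |f t| ≤ M)
    (hfe : ∀ i, i < N → ∀ t ∈ Ico (x 0) (x N), f (Lm x N i t) = α i * f t + q i t)
    (hfeN : f (Lm x N (N - 1) (x N)) = α (N - 1) * f (x N) + q (N - 1) (x N))
    (Qf : ℝ → ℝ)
    (hQf : ∀ i, i < N → ∀ t ∈ Ico (x i) (x (i + 1)), Qf t = q i (LmInv x N i t))
    (hQfN : Qf (x N) = q (N - 1) (LmInv x N (N - 1) (x N))) :
    ∀ s : ℝ,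
      ∫ t in (x 0)..(x N), Real.exp (-(s * t)) * f t =
        (∑ i ∈ Finset.range N,
          aC x N i * α i * Real.exp (-(s * bC x N i)) *
            ∫ t in (x 0)..(x N), Real.exp (-(aC x N i * s * t)) * f t) +
        ∫ t in (x 0)..(x N), Real.exp (-(s * t)) * Qf t := by
  intro s
  have hxN : x 0 < x N := x0_lt_xN x N hN hx
  -- a.e. avoidance of a single point
  have haene : ∀ c : ℝ, ∀ᵐ t : ℝ, t ≠ c := by
    intro c
    rw [MeasureTheory.ae_iff]
    have : {t : ℝ | ¬ t ≠ c} = {c} := by ext u; simp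
    rw [this]
    exact Real.volume_singleton
  obtain ⟨M0, hM0⟩ := hfb
  set M : ℝ := max M0 0 with hMdef
  have hM : ∀ t ∈ Icc (x 0) (x N), |f t| ≤ M := fun t ht => (hM0 t ht).trans (le_max_left _ _)
  have hM0' : 0 ≤ M := le_max_right _ _
  -- the contraction ratio
  have hne : (Finset.range N).Nonempty := ⟨0, Finset.mem_range.2 (by omega)⟩
  set r : ℝ := (Finset.range N).sup' hne (fun i => |α i|) with hrdef
  have hr1 : r < 1 := (Finset.sup'_lt_iff hne).2 fun i hi => hα i (Finset.mem_range.1 hi)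
  have hr0 : 0 ≤ r := (abs_nonneg (α 0)).trans
    (Finset.le_sup' (fun i => |α i|) (Finset.mem_range.2 (show 0 < N by omega)))
  have hrle : ∀ i, i < N → |α i| ≤ r := fun i hi => by
    rw [hrdef]; exact Finset.le_sup' (fun j => |α j|) (Finset.mem_range.2 hi)
  -- continuity of clamped q
  have hqc : ∀ i, i < N → Continuous (fun t => q i (clampI x N t)) := by
    intro i hi
    obtain ⟨C, hC⟩ := hq i hi
    rw [Metric.continuous_iff]
    intro t ε hε
    refine ⟨ε / (max C 0 + 1), by positivity, fun u hu => ?_⟩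
    have h1 : |q i (clampI x N u) - q i (clampI x N t)| ≤ C * |clampI x N u - clampI x N t| :=
      hC _ (clampI_mem x N hxN.le u) _ (clampI_mem x N hxN.le t)
    have h2 : C * |clampI x N u - clampI x N t| ≤ (max C 0) * |u - t| :=
      mul_le_mul (le_max_left _ _) (clampI_lip x N u t) (abs_nonneg _) (le_max_right _ _)
    rw [Real.dist_eq] at hu ⊢
    have h3 : (max C 0) * |u - t| < (max C 0 + 1) * (ε / (max C 0 + 1)) := by
      have hpos : (0:ℝ) < max C 0 + 1 := by positivity
      calc (max C 0) * |u - t| ≤ (max C 0) * (ε / (max C 0 + 1)) := by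
            apply mul_le_mul_of_nonneg_left hu.le (le_max_right _ _)
        _ < (max C 0 + 1) * (ε / (max C 0 + 1)) := by
            apply mul_lt_mul_of_pos_right (by linarith) (by positivity)
    have h4 : (max C 0 + 1) * (ε / (max C 0 + 1)) = ε := by
      field_simp
    linarith [h1.trans h2, h3]
  have hqcont : ∀ i, i < N → ContinuousOn (q i) (Icc (x 0) (x N)) := by
    intro i hi
    exact ((hqc i hi).continuousOn).congr fun t ht => by show q i t = q i (clampI x N t); rw [clampI_eq x N ht]
  -- measurability of the pieces
  have hLmInvCont : ∀ i : ℕ, Continuous (LmInv x N i) := fun i =>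
    (continuous_id.sub continuous_const).div_const _
  have hSmeas : Measurable (Sfn x N) :=
    Finset.measurable_sum _ fun i _ => ((hLmInvCont i).measurable).indicator measurableSet_Ico
  have hAmeas : Measurable (Afn x N α) :=
    Finset.measurable_sum _ fun i _ => measurable_const.indicator measurableSet_Ico
  have hQmmeas : Measurable (Qfn x N q) := by
    apply Finset.measurable_sum
    intro i hi
    exact (((hqc i (Finset.mem_range.1 hi)).comp (hLmInvCont i)).measurable).indicator
      measurableSet_Ico
  have hgmeas : ∀ n, Measurable (gfn x N α q n) := by
    intro n
    induction n with
    | zero => exact measurable_const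
    | succ n ih => exact (hAmeas.mul (ih.comp hSmeas)).add hQmmeas
  -- evaluation of the piecewise functions
  have hstep : ∀ t ∈ Ico (x 0) (x N), ∃ j, j < N ∧ Sfn x N t = LmInv x N j t ∧
      Afn x N α t = α j ∧ Qfn x N q t = q j (LmInv x N j t) ∧
      LmInv x N j t ∈ Ico (x 0) (x N) := by
    intro t ht
    obtain ⟨j, hj, htj⟩ := exists_piece x N hN hx ht
    have hmem := LmInv_mem x N hN hx hj htj
    refine ⟨j, hj, indicator_sum_eval x N hx hj htj _,
      indicator_sum_eval x N hx hj htj (fun i _ => α i), ?_, hmem⟩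
    have heval := indicator_sum_eval x N hx hj htj
      (fun i u => q i (clampI x N (LmInv x N i u)))
    rw [clampI_eq x N (Ico_subset_Icc_self hmem)] at heval
    exact heval
  have hfid : ∀ t ∈ Ico (x 0) (x N),
      f t = Afn x N α t * f (Sfn x N t) + Qfn x N q t := by
    intro t ht
    obtain ⟨j, hj, hS, hA, hQ, hmem⟩ := hstep t ht
    rw [hS, hA, hQ]
    have h1 := hfe j hj (LmInv x N j t) hmem
    rwa [Lm_LmInv x N j (aC_pos x N hN hx hj).ne' t] at h1
  -- geometric bound
  have hbound : ∀ n, ∀ t ∈ Ico (x 0) (x N), |f t - gfn x N α q n t| ≤ M * r ^ n := by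
    intro n
    induction n with
    | zero =>
      intro t ht
      simpa [gfn] using hM t (Ico_subset_Icc_self ht)
    | succ n ih =>
      intro t ht
      obtain ⟨j, hj, hS, hA, hQ, hmem⟩ := hstep t ht
      have h1 : f t - gfn x N α q (n + 1) t
          = Afn x N α t * (f (Sfn x N t) - gfn x N α q n (Sfn x N t)) := by
        rw [show gfn x N α q (n + 1) t
            = Afn x N α t * gfn x N α q n (Sfn x N t) + Qfn x N q t from rfl,
          hfid t ht]
        ring
      have h2 : Sfn x N t ∈ Ico (x 0) (x N) := by rw [hS]; exact hmem
      have h3 : |Afn x N α t| ≤ r := by rw [hA]; exact hrle j hj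
      rw [h1, abs_mul]
      calc |Afn x N α t| * |f (Sfn x N t) - gfn x N α q n (Sfn x N t)|
          ≤ r * (M * r ^ n) := mul_le_mul h3 (ih _ h2) (abs_nonneg _) hr0
        _ = M * r ^ (n + 1) := by ring
  -- a.e. measurability of f
  have hfaem : AEMeasurable f (MeasureTheory.volume.restrict (Ioc (x 0) (x N))) := by
    apply aemeasurable_of_tendsto_metrizable_ae Filter.atTop
      (fun n => (hgmeas n).aemeasurable)
    have h1 : ∀ᵐ t ∂(MeasureTheory.volume.restrict (Ioc (x 0) (x N))), t ≠ x N :=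
      MeasureTheory.ae_restrict_of_ae (haene (x N))
    filter_upwards [h1, MeasureTheory.ae_restrict_mem measurableSet_Ioc] with t ht1 ht2
    have htI : t ∈ Ico (x 0) (x N) := ⟨ht2.1.le, lt_of_le_of_ne ht2.2 ht1⟩
    rw [tendsto_iff_dist_tendsto_zero]
    have hb : ∀ n : ℕ, dist (gfn x N α q n t) (f t) ≤ M * r ^ n := fun n => by
      rw [Real.dist_eq, abs_sub_comm]
      exact hbound n t htI
    exact squeeze_zero (fun n => dist_nonneg) hb
      (by simpa using (tendsto_pow_atTop_nhds_zero_of_lt_one hr0 hr1).const_mul M)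
  -- integrability of the weighted f
  have hIf : ∀ c : ℝ, IntervalIntegrable (fun t => Real.exp (-(c * t)) * f t)
      MeasureTheory.volume (x 0) (x N) := by
    intro c
    rw [intervalIntegrable_iff, uIoc_of_le hxN.le]
    constructor
    · exact ((Real.continuous_exp.comp
        ((continuous_const.mul continuous_id).neg)).aemeasurable.mul hfaem).aestronglyMeasurable
    · apply MeasureTheory.HasFiniteIntegral.restrict_of_bounded
        (C := Real.exp (|c| * (|x 0| + |x N|)) * M) measure_Ioc_lt_top
      filter_upwards [MeasureTheory.ae_restrict_mem measurableSet_Ioc] with t ht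
      have htabs : |t| ≤ |x 0| + |x N| := by
        rw [abs_le]
        constructor
        · linarith [neg_abs_le (x 0), ht.1, abs_nonneg (x N)]
        · linarith [le_abs_self (x N), ht.2, abs_nonneg (x 0)]
      have hexp : Real.exp (-(c * t)) ≤ Real.exp (|c| * (|x 0| + |x N|)) := by
        apply Real.exp_le_exp.2
        calc -(c * t) ≤ |c * t| := neg_le_abs _
          _ = |c| * |t| := abs_mul _ _
          _ ≤ |c| * (|x 0| + |x N|) := mul_le_mul_of_nonneg_left htabs (abs_nonneg _)
      rw [Real.norm_eq_abs, abs_mul, Real.abs_exp]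
      exact mul_le_mul hexp (hM t ⟨ht.1.le, ht.2⟩) (abs_nonneg _) (Real.exp_pos _).le
  -- integrability of the weighted q i
  have hIq : ∀ i, i < N → ∀ c : ℝ, IntervalIntegrable (fun u => Real.exp (-(c * u)) * q i u)
      MeasureTheory.volume (x 0) (x N) := by
    intro i hi c
    apply ContinuousOn.intervalIntegrable
    rw [uIcc_of_le hxN.le]
    exact ((Real.continuous_exp.comp
      ((continuous_const.mul continuous_id).neg)).continuousOn).mul (hqcont i hi)
  -- key computation for the f-part on each piece
  have key1 : ∀ i, i < N →
      (∫ t in (x i)..(x (i + 1)), Real.exp (-(s * t)) * f t)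
      = aC x N i * α i * Real.exp (-(s * bC x N i)) *
          (∫ u in (x 0)..(x N), Real.exp (-(aC x N i * s * u)) * f u)
        + aC x N i * Real.exp (-(s * bC x N i)) *
          (∫ u in (x 0)..(x N), Real.exp (-(aC x N i * s * u)) * q i u) := by
    intro i hi
    have ha := aC_pos x N hN hx hi
    have hane := ha.ne'
    have h1 := intervalIntegral.integral_comp_mul_add
      (a := x 0) (b := x N) (fun t => Real.exp (-(s * t)) * f t) hane (bC x N i)
    rw [Lm_left x N hN hx i, Lm_right x N hN hx i] at h1
    have h2 : (∫ t in (x i)..(x (i + 1)), Real.exp (-(s * t)) * f t)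
        = aC x N i * ∫ u in (x 0)..(x N),
            Real.exp (-(s * (aC x N i * u + bC x N i))) * f (aC x N i * u + bC x N i) := by
      rw [h1, smul_eq_mul, ← mul_assoc, mul_inv_cancel₀ hane, one_mul]
    rw [h2]
    have h3 : (∫ u in (x 0)..(x N),
          Real.exp (-(s * (aC x N i * u + bC x N i))) * f (aC x N i * u + bC x N i))
        = ∫ u in (x 0)..(x N),
          Real.exp (-(s * (aC x N i * u + bC x N i))) * (α i * f u + q i u) := by
      apply intervalIntegral.integral_congr_ae
      filter_upwards [haene (x N)] with u hu humem
      rw [uIoc_of_le hxN.le] at humem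
      have huI : u ∈ Ico (x 0) (x N) := ⟨humem.1.le, lt_of_le_of_ne humem.2 hu⟩
      have := hfe i hi u huI
      rw [Lm] at this
      rw [this]
    rw [h3]
    have h4 : ∀ u : ℝ, Real.exp (-(s * (aC x N i * u + bC x N i))) * (α i * f u + q i u)
        = (α i * Real.exp (-(s * bC x N i))) * (Real.exp (-(aC x N i * s * u)) * f u)
          + Real.exp (-(s * bC x N i)) * (Real.exp (-(aC x N i * s * u)) * q i u) := by
      intro u
      rw [show -(s * (aC x N i * u + bC x N i)) = -(aC x N i * s * u) + -(s * bC x N i) by ring,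
        Real.exp_add]
      ring
    rw [intervalIntegral.integral_congr (fun u _ => h4 u)]
    rw [intervalIntegral.integral_add ((hIf (aC x N i * s)).const_mul _)
      ((hIq i hi (aC x N i * s)).const_mul _),
      intervalIntegral.integral_const_mul, intervalIntegral.integral_const_mul]
    ring
  -- key computation for the Q-part on each piece
  have keyQ : ∀ i, i < N →
      (∫ t in (x i)..(x (i + 1)), Real.exp (-(s * t)) * Qf t)
      = aC x N i * Real.exp (-(s * bC x N i)) *
          (∫ u in (x 0)..(x N), Real.exp (-(aC x N i * s * u)) * q i u) := by
    intro i hi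
    have ha := aC_pos x N hN hx hi
    have hane := ha.ne'
    have h1 : (∫ t in (x i)..(x (i + 1)), Real.exp (-(s * t)) * Qf t)
        = ∫ t in (x i)..(x (i + 1)), Real.exp (-(s * t)) * q i (LmInv x N i t) := by
      apply intervalIntegral.integral_congr_ae
      filter_upwards [haene (x (i + 1))] with t ht htmem
      rw [uIoc_of_le (hx i hi).le] at htmem
      have htI : t ∈ Ico (x i) (x (i + 1)) := ⟨htmem.1.le, lt_of_le_of_ne htmem.2 ht⟩
      rw [hQf i hi t htI]
    rw [h1]
    have h2 := intervalIntegral.integral_comp_mul_add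
      (a := x 0) (b := x N) (fun t => Real.exp (-(s * t)) * q i (LmInv x N i t)) hane (bC x N i)
    rw [Lm_left x N hN hx i, Lm_right x N hN hx i] at h2
    have h3 : (∫ t in (x i)..(x (i + 1)), Real.exp (-(s * t)) * q i (LmInv x N i t))
        = aC x N i * ∫ u in (x 0)..(x N),
            Real.exp (-(s * (aC x N i * u + bC x N i)))
              * q i (LmInv x N i (aC x N i * u + bC x N i)) := by
      rw [h2, smul_eq_mul, ← mul_assoc, mul_inv_cancel₀ hane, one_mul]
    rw [h3]
    have h4 : ∀ u : ℝ, Real.exp (-(s * (aC x N i * u + bC x N i)))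
          * q i (LmInv x N i (aC x N i * u + bC x N i))
        = Real.exp (-(s * bC x N i)) * (Real.exp (-(aC x N i * s * u)) * q i u) := by
      intro u
      have h5 : LmInv x N i (aC x N i * u + bC x N i) = u := LmInv_Lm x N i hane u
      rw [h5, show -(s * (aC x N i * u + bC x N i)) = -(aC x N i * s * u) + -(s * bC x N i)
        by ring, Real.exp_add]
      ring
    rw [intervalIntegral.integral_congr (fun u _ => h4 u),
      intervalIntegral.integral_const_mul]
    ring
  -- splitting the interval
  have hsub : ∀ k, k < N → uIcc (x k) (x (k + 1)) ⊆ uIcc (x 0) (x N) := by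
    intro k hk
    rw [uIcc_of_le (hx k hk).le, uIcc_of_le hxN.le]
    exact Icc_subset_Icc (x_mono x N hx (Nat.zero_le k) hk.le) (x_mono x N hx hk le_rfl)
  have hsum1 : (∑ k ∈ Finset.range N, ∫ t in (x k)..(x (k + 1)), Real.exp (-(s * t)) * f t)
      = ∫ t in (x 0)..(x N), Real.exp (-(s * t)) * f t :=
    intervalIntegral.sum_integral_adjacent_intervals fun k hk => (hIf s).mono_set (hsub k hk)
  have hIQf : ∀ k, k < N → IntervalIntegrable (fun t => Real.exp (-(s * t)) * Qf t)
      MeasureTheory.volume (x k) (x (k + 1)) := by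
    intro k hk
    have hcont : ContinuousOn (fun t => Real.exp (-(s * t)) * q k (LmInv x N k t))
        (uIcc (x k) (x (k + 1))) := by
      rw [uIcc_of_le (hx k hk).le]
      apply ContinuousOn.mul
      · exact (Real.continuous_exp.comp ((continuous_const.mul continuous_id).neg)).continuousOn
      · exact (hqcont k hk).comp ((hLmInvCont k).continuousOn)
          fun t ht => LmInv_mem_Icc x N hN hx hk ht
    rw [intervalIntegrable_iff]
    apply (intervalIntegrable_iff.mp (hcont.intervalIntegrable)).congr
    filter_upwards [MeasureTheory.ae_restrict_of_ae (haene (x (k + 1))),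
      MeasureTheory.ae_restrict_mem measurableSet_uIoc] with t ht1 ht2
    rw [uIoc_of_le (hx k hk).le] at ht2
    have htI : t ∈ Ico (x k) (x (k + 1)) := ⟨ht2.1.le, lt_of_le_of_ne ht2.2 ht1⟩
    rw [hQf k hk t htI]
  have hsum2 : (∑ k ∈ Finset.range N, ∫ t in (x k)..(x (k + 1)), Real.exp (-(s * t)) * Qf t)
      = ∫ t in (x 0)..(x N), Real.exp (-(s * t)) * Qf t :=
    intervalIntegral.sum_integral_adjacent_intervals hIQf
  -- final assembly
  rw [← hsum1, ← hsum2]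
  rw [Finset.sum_congr rfl (fun i hi => key1 i (Finset.mem_range.1 hi)),
    Finset.sum_congr rfl (fun i hi => keyQ i (Finset.mem_range.1 hi))]
  rw [Finset.sum_add_distrib]
end

section
/- Assume the knots are equally spaced, so that a_i = 1/N for all i, assume each q_i is Lipschitz continuous, and let f be the bounded fractal function. Define f̂(s) = ∫_{x_0}^{x_N} e^{jsx} f(x) dx, Q̂(s) = ∫_{x_0}^{x_N} e^{jsx} Q(x) dx with Q(x) = q_i(L_i^{-1}(x)) for x ∈ I_i, and Λ(s) = (1/N) ∑_{i=1}^N α_i e^{j s b_i}. Then for every real s the series ∑_{k=0}^∞ (∏_{m=1}^k Λ(s/N^{m−1})) Q̂(s/N^k) converges (the k-th summand is bounded in modulus by M·|α|_∞^k where |α|_∞ = max_i|α_i| < 1 and M is a bound for |Q̂|), and f̂(s) = ∑_{k=0}^∞ (∏_{m=1}^k Λ(s/N^{m−1})) Q̂(s/N^k), where the empty product (k = 0) equals 1. -/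
open Set

open Set MeasureTheory Filter
set_option maxHeartbeats 1000000

lemma helper_int {g : ℝ → ℝ} (hg : Measurable g) {C : ℝ} (hC : ∀ t, |g t| ≤ C)
    (σ a b : ℝ) :
    IntervalIntegrable (fun t => Complex.exp (((σ * t : ℝ) : ℂ) * Complex.I) * (g t : ℂ))
      volume a b := by
  have hmeas : Measurable fun t : ℝ => Complex.exp (((σ * t : ℝ) : ℂ) * Complex.I) * (g t : ℂ) := by
    apply Measurable.mul
    · exact Complex.measurable_exp.comp
        ((Complex.measurable_ofReal.comp (measurable_const.mul measurable_id)).mul_const _)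
    · exact Complex.measurable_ofReal.comp hg
  refine (intervalIntegrable_const (c := C)).mono_fun hmeas.aestronglyMeasurable ?_
  refine Eventually.of_forall fun t => ?_
  have h1 : ‖Complex.exp (((σ * t : ℝ) : ℂ) * Complex.I)‖ = 1 := by
    simpa using Complex.norm_exp_ofReal_mul_I (σ * t)
  simp only [norm_mul, h1, one_mul, Complex.norm_real, Real.norm_eq_abs]
  exact (hC t).trans (le_abs_self C)

lemma helper_series (Nr : ℝ) (Fh Qh Λh : ℝ → ℂ) (r B : ℝ) (hr0 : 0 ≤ r) (hr1 : r < 1)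
    (hB : ∀ σ, ‖Fh σ‖ ≤ B) (hΛ : ∀ σ, ‖Λh σ‖ ≤ r)
    (hrec : ∀ σ, Fh σ = Λh σ * Fh (σ / Nr) + Qh σ) (s : ℝ) :
    HasSum (fun k => (∏ m ∈ Finset.range k, Λh (s / Nr ^ m)) * Qh (s / Nr ^ k)) (Fh s) := by
  set c : ℕ → ℂ := fun k => (∏ m ∈ Finset.range k, Λh (s / Nr ^ m)) * Qh (s / Nr ^ k) with hc
  have hprod : ∀ k : ℕ, ‖∏ m ∈ Finset.range k, Λh (s / Nr ^ m)‖ ≤ r ^ k := by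
    intro k
    calc ‖∏ m ∈ Finset.range k, Λh (s / Nr ^ m)‖
        = ∏ m ∈ Finset.range k, ‖Λh (s / Nr ^ m)‖ := norm_prod _ _
      _ ≤ ∏ _m ∈ Finset.range k, r :=
          Finset.prod_le_prod (fun _ _ => norm_nonneg _) (fun m _ => hΛ _)
      _ = r ^ k := by simp
  have hQB : ∀ σ, ‖Qh σ‖ ≤ B + r * B := by
    intro σ
    have h1 : Qh σ = Fh σ - Λh σ * Fh (σ / Nr) := by rw [hrec σ]; ring
    rw [h1]
    refine (norm_sub_le _ _).trans (add_le_add (hB σ) ?_)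
    rw [norm_mul]
    exact mul_le_mul (hΛ σ) (hB _) (norm_nonneg _) hr0
  have hsummable : Summable c := by
    apply Summable.of_norm
    refine Summable.of_nonneg_of_le (fun k => norm_nonneg _) (fun k => ?_)
      ((summable_geometric_of_lt_one hr0 hr1).mul_right (B + r * B))
    rw [hc]
    calc ‖(∏ m ∈ Finset.range k, Λh (s / Nr ^ m)) * Qh (s / Nr ^ k)‖
        = ‖∏ m ∈ Finset.range k, Λh (s / Nr ^ m)‖ * ‖Qh (s / Nr ^ k)‖ := norm_mul _ _
      _ ≤ r ^ k * (B + r * B) :=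
          mul_le_mul (hprod k) (hQB _) (norm_nonneg _) (pow_nonneg hr0 k)
  have hpart : ∀ K : ℕ, ∑ k ∈ Finset.range K, c k
      = Fh s - (∏ m ∈ Finset.range K, Λh (s / Nr ^ m)) * Fh (s / Nr ^ K) := by
    intro K
    induction K with
    | zero => simp
    | succ K ih =>
      have hck : c K = (∏ m ∈ Finset.range K, Λh (s / Nr ^ m)) * Qh (s / Nr ^ K) := rfl
      rw [Finset.sum_range_succ, ih, Finset.prod_range_succ, hck]
      have hdiv : s / Nr ^ K / Nr = s / Nr ^ (K + 1) := by rw [div_div, pow_succ]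
      have h2 := hrec (s / Nr ^ K)
      rw [hdiv] at h2
      linear_combination (-(∏ m ∈ Finset.range K, Λh (s / Nr ^ m))) * h2
  have hB0 : 0 ≤ B := le_trans (norm_nonneg _) (hB s)
  have hlim : Tendsto (fun K => ∑ k ∈ Finset.range K, c k) atTop (nhds (Fh s)) := by
    rw [tendsto_congr hpart]
    have h0 : Tendsto (fun K : ℕ => (∏ m ∈ Finset.range K, Λh (s / Nr ^ m)) * Fh (s / Nr ^ K))
        atTop (nhds 0) := by
      refine squeeze_zero_norm (fun K => ?_) (a := fun K : ℕ => r ^ K * B) ?_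
      · rw [norm_mul]
        exact mul_le_mul (hprod K) (hB _) (norm_nonneg _) (pow_nonneg hr0 K)
      · simpa using (tendsto_pow_atTop_nhds_zero_of_lt_one hr0 hr1).mul_const B
    simpa using tendsto_const_nhds.sub h0
  have h3 := hsummable.hasSum
  rwa [tendsto_nhds_unique h3.tendsto_sum_nat hlim] at h3
/-- For equally spaced knots, the Fourier-type transform of the bounded fractal function is
given by the convergent series `f̂(s) = ∑_{k=0}^∞ (∏_{m=1}^k Λ(s/N^{m-1})) Q̂(s/N^k)`, where
`Λ(s) = (1/N) ∑ i α i e^{j s b i}`. -/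
theorem stmt17
    (N : ℕ) (hN : 2 ≤ N)
    (x : ℕ → ℝ)
    (hx0N : x 0 < x N)
    (hxeq : ∀ i, i ≤ N → x i = x 0 + (i : ℝ) * (x N - x 0) / (N : ℝ))
    (α : ℕ → ℝ) (hα : ∀ i, i < N → |α i| < 1)
    (q : ℕ → ℝ → ℝ)
    (hq : ∀ i, i < N → ∃ C, ∀ u ∈ Icc (x 0) (x N), ∀ v ∈ Icc (x 0) (x N),
      |q i u - q i v| ≤ C * |u - v|)
    (f : ℝ → ℝ)
    (hfb : ∃ M, ∀ t ∈ Icc (x 0) (x N), |f t| ≤ M)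
    (hfe : ∀ i, i < N → ∀ t ∈ Ico (x 0) (x N), f (Lm x N i t) = α i * f t + q i t)
    (hfeN : f (Lm x N (N - 1) (x N)) = α (N - 1) * f (x N) + q (N - 1) (x N))
    (Qf : ℝ → ℝ)
    (hQf : ∀ i, i < N → ∀ t ∈ Ico (x i) (x (i + 1)), Qf t = q i (LmInv x N i t))
    (hQfN : Qf (x N) = q (N - 1) (LmInv x N (N - 1) (x N))) :
    ∀ s : ℝ,
      HasSum
        (fun k : ℕ =>
          (∏ m ∈ Finset.range k,
            ((N : ℂ))⁻¹ * ∑ i ∈ Finset.range N,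
              ((α i : ℝ) : ℂ) *
                Complex.exp (((s / (N : ℝ) ^ m * bC x N i : ℝ) : ℂ) * Complex.I)) *
          ∫ t in (x 0)..(x N),
            Complex.exp (((s / (N : ℝ) ^ k * t : ℝ) : ℂ) * Complex.I) * ((Qf t : ℝ) : ℂ))
        (∫ t in (x 0)..(x N),
          Complex.exp (((s * t : ℝ) : ℂ) * Complex.I) * ((f t : ℝ) : ℂ)) := by
  classical
  intro s
  obtain ⟨M, hM⟩ := hfb
  have hNpos : 0 < N := lt_of_lt_of_le (by norm_num) hN
  have hNR : (0:ℝ) < (N:ℝ) := Nat.cast_pos.mpr hNpos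
  have hNne : (N:ℝ) ≠ 0 := ne_of_gt hNR
  have hd : (0:ℝ) < x N - x 0 := sub_pos.mpr hx0N
  have hdne : x N - x 0 ≠ 0 := ne_of_gt hd
  set h : ℝ := (x N - x 0) / (N:ℝ) with hh
  have hhpos : 0 < h := div_pos hd hNR
  have hxi : ∀ i, i ≤ N → x i = x 0 + (i:ℝ) * h := by
    intro i hi; rw [hxeq i hi, hh, mul_div_assoc]
  -- basic facts about the affine maps
  have haC : ∀ i, i < N → aC x N i = 1 / (N:ℝ) := by
    intro i hi
    unfold aC
    rw [hxi (i+1) (Nat.succ_le_of_lt hi), hxi i hi.le, hh]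
    field_simp
    push_cast
    ring
  have haCpos : ∀ i, i < N → 0 < aC x N i := by
    intro i hi; rw [haC i hi]; positivity
  have haCne : ∀ i, i < N → aC x N i ≠ 0 := fun i hi => ne_of_gt (haCpos i hi)
  have hLm0 : ∀ i, Lm x N i (x 0) = x i := by
    intro i; unfold Lm aC bC; field_simp; ring
  have hLmN : ∀ i, Lm x N i (x N) = x (i+1) := by
    intro i; unfold Lm aC bC; field_simp; ring
  have hLmInvLm : ∀ i, i < N → ∀ u, LmInv x N i (Lm x N i u) = u := by
    intro i hi u
    unfold Lm LmInv
    rw [add_sub_cancel_right, mul_div_cancel_left₀ _ (haCne i hi)]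
  have hLmLmInv : ∀ i, i < N → ∀ t, Lm x N i (LmInv x N i t) = t := by
    intro i hi t
    unfold Lm LmInv
    rw [mul_comm, div_mul_cancel₀ _ (haCne i hi)]
    ring
  have hLmInvxi : ∀ i, i < N → LmInv x N i (x i) = x 0 := by
    intro i hi; rw [← hLm0 i, hLmInvLm i hi]
  have hLmInvxi1 : ∀ i, i < N → LmInv x N i (x (i+1)) = x N := by
    intro i hi; rw [← hLmN i, hLmInvLm i hi]
  have hLmInvmono : ∀ i, i < N → ∀ u v : ℝ, u ≤ v → LmInv x N i u ≤ LmInv x N i v := by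
    intro i hi u v huv
    unfold LmInv
    have ha := haCpos i hi
    gcongr
  have hLmInvlt : ∀ i, i < N → ∀ u v : ℝ, u < v → LmInv x N i u < LmInv x N i v := by
    intro i hi u v huv
    unfold LmInv
    exact div_lt_div_of_pos_right (sub_lt_sub_right huv _) (haCpos i hi)
  have hLmInvIcc : ∀ i, i < N → ∀ t ∈ Icc (x i) (x (i+1)), LmInv x N i t ∈ Icc (x 0) (x N) := by
    intro i hi t ht
    constructor
    · rw [← hLmInvxi i hi]; exact hLmInvmono i hi _ _ ht.1
    · rw [← hLmInvxi1 i hi]; exact hLmInvmono i hi _ _ ht.2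
  have hLmInvIco : ∀ i, i < N → ∀ t ∈ Ico (x i) (x (i+1)), LmInv x N i t ∈ Ico (x 0) (x N) := by
    intro i hi t ht
    constructor
    · rw [← hLmInvxi i hi]; exact hLmInvmono i hi _ _ ht.1
    · rw [← hLmInvxi1 i hi]; exact hLmInvlt i hi _ _ ht.2
  -- monotonicity of the knots
  have hxlt : ∀ i, i < N → x i < x (i+1) := by
    intro i hi
    rw [hxi i hi.le, hxi (i+1) (Nat.succ_le_of_lt hi)]
    push_cast
    nlinarith [hhpos]
  have hx0le : ∀ i, i ≤ N → x 0 ≤ x i := by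
    intro i hi
    rw [hxi i hi]
    nlinarith [hhpos, (Nat.cast_nonneg i : (0:ℝ) ≤ (i:ℝ))]
  have hxleN : ∀ i, i ≤ N → x i ≤ x N := by
    intro i hi
    rw [hxi i hi, hxi N le_rfl]
    have hiN : (i:ℝ) ≤ (N:ℝ) := Nat.cast_le.mpr hi
    nlinarith [hhpos]
  -- the index function
  set idx : ℝ → ℕ := fun t => min (N-1) ⌊(t - x 0)/h⌋₊ with hidxdef
  have hidxlt : ∀ t, idx t < N := fun t =>
    lt_of_le_of_lt (min_le_left _ _) (Nat.sub_lt hNpos one_pos)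
  have hidxIco : ∀ t ∈ Ico (x 0) (x N), x (idx t) ≤ t ∧ t < x (idx t + 1) := by
    intro t ht
    have h0 : 0 ≤ (t - x 0)/h := div_nonneg (sub_nonneg.mpr ht.1) hhpos.le
    have hflt : (t - x 0)/h < (N:ℝ) := by
      rw [div_lt_iff₀ hhpos]
      have hxN : x N = x 0 + (N:ℝ) * h := hxi N le_rfl
      nlinarith [ht.2]
    have hjle : (⌊(t - x 0)/h⌋₊ : ℝ) ≤ (t - x 0)/h := Nat.floor_le h0
    have hjlt : ⌊(t - x 0)/h⌋₊ < N := by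
      exact_mod_cast lt_of_le_of_lt hjle hflt
    have hmin : idx t = ⌊(t - x 0)/h⌋₊ := by
      simp only [hidxdef]
      exact min_eq_right (Nat.le_pred_of_lt hjlt)
    rw [hmin]
    constructor
    · rw [hxi _ hjlt.le]
      have h2 : (⌊(t - x 0)/h⌋₊ : ℝ) * h ≤ t - x 0 := (le_div_iff₀ hhpos).mp hjle
      linarith
    · rw [hxi _ (Nat.succ_le_of_lt hjlt)]
      have hlt1 : (t - x 0)/h < (⌊(t - x 0)/h⌋₊ : ℝ) + 1 := Nat.lt_floor_add_one _
      have h2 : t - x 0 < ((⌊(t - x 0)/h⌋₊ : ℝ) + 1) * h := (div_lt_iff₀ hhpos).mp hlt1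
      push_cast
      linarith
  have hidxN : idx (x N) = N - 1 := by
    have hNfl : (x N - x 0)/h = (N:ℝ) := by rw [hh]; field_simp
    simp only [hidxdef, hNfl, Nat.floor_natCast]
    exact min_eq_left (Nat.sub_le N 1)
  have hN1 : N - 1 + 1 = N := Nat.succ_pred_eq_of_pos hNpos
  have hN1lt : N - 1 < N := Nat.sub_lt hNpos one_pos
  -- the shift map
  set S : ℝ → ℝ := fun t => LmInv x N (idx t) t with hSdef
  have hSxN : S (x N) = x N := by
    have h1 : Lm x N (N-1) (x N) = x N := by rw [hLmN, hN1]
    simp only [hSdef, hidxN]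
    conv_lhs => rw [← h1, hLmInvLm (N-1) hN1lt]
  -- master equation
  have hmaster : ∀ t ∈ Icc (x 0) (x N),
      f t = α (idx t) * f (S t) + Qf t ∧ Qf t = q (idx t) (S t) ∧ S t ∈ Icc (x 0) (x N) := by
    intro t ht
    rcases eq_or_lt_of_le ht.2 with heq | hlt
    · have h1 : Lm x N (N-1) (x N) = x N := by rw [hLmN, hN1]
      have hLN : LmInv x N (N-1) (x N) = x N := by
        conv_lhs => rw [← h1, hLmInvLm (N-1) hN1lt]
      have hfN : f (x N) = α (N - 1) * f (x N) + q (N - 1) (x N) := by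
        conv_lhs => rw [← h1]
        exact hfeN
      have hQN : Qf (x N) = q (N - 1) (x N) := by rw [hQfN, hLN]
      rw [heq]
      refine ⟨?_, ?_, ?_⟩
      · rw [hidxN, hSxN, hQN]; exact hfN
      · rw [hidxN, hSxN]; exact hQN
      · rw [hSxN]; exact ⟨hx0N.le, le_rfl⟩
    · have htIco : t ∈ Ico (x 0) (x N) := ⟨ht.1, hlt⟩
      obtain ⟨h1, h2⟩ := hidxIco t htIco
      have hj : idx t < N := hidxlt t
      have hu : LmInv x N (idx t) t ∈ Ico (x 0) (x N) := hLmInvIco _ hj t ⟨h1, h2⟩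
      refine ⟨?_, ?_, ?_⟩
      · calc f t = f (Lm x N (idx t) (LmInv x N (idx t) t)) := by rw [hLmLmInv _ hj]
          _ = α (idx t) * f (S t) + q (idx t) (S t) := hfe _ hj _ hu
          _ = α (idx t) * f (S t) + Qf t := by rw [hQf _ hj t ⟨h1, h2⟩]
      · exact hQf _ hj t ⟨h1, h2⟩
      · exact Ico_subset_Icc_self hu
  have hSIcc : ∀ t ∈ Icc (x 0) (x N), S t ∈ Icc (x 0) (x N) := fun t ht => (hmaster t ht).2.2
  -- clamp and Lipschitz constants
  set clamp : ℝ → ℝ := fun u => max (x 0) (min (x N) u) with hclampdef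
  have hclampmem : ∀ u, clamp u ∈ Icc (x 0) (x N) := by
    intro u
    constructor
    · exact le_max_left _ _
    · simp only [hclampdef]
      exact max_le hx0N.le (min_le_left _ _)
  have hclampid : ∀ u ∈ Icc (x 0) (x N), clamp u = u := by
    intro u hu
    simp only [hclampdef]
    rw [min_eq_right hu.2, max_eq_right hu.1]
  set Cq : ℕ → ℝ := fun i => if hi : i < N then max (Classical.choose (hq i hi)) 0 else 0
    with hCqdef
  have hCq0 : ∀ i, 0 ≤ Cq i := by
    intro i
    simp only [hCqdef]
    split
    · exact le_max_right _ _
    · exact le_refl 0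
  have hCqspec : ∀ i (hi : i < N), ∀ u ∈ Icc (x 0) (x N), ∀ v ∈ Icc (x 0) (x N),
      |q i u - q i v| ≤ Cq i * |u - v| := by
    intro i hi u hu v hv
    have hs := Classical.choose_spec (hq i hi) u hu v hv
    simp only [hCqdef, dif_pos hi]
    exact hs.trans (mul_le_mul_of_nonneg_right (le_max_left _ _) (abs_nonneg _))
  set q' : ℕ → ℝ → ℝ := fun i u => q i (clamp u) with hq'def
  have hclamplip : ∀ u v : ℝ, |clamp u - clamp v| ≤ |u - v| := by
    intro u v
    simp only [hclampdef]
    calc |max (x 0) (min (x N) u) - max (x 0) (min (x N) v)|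
        = |max (min (x N) u) (x 0) - max (min (x N) v) (x 0)| := by
          rw [max_comm (x 0) (min (x N) u), max_comm (x 0) (min (x N) v)]
      _ ≤ |min (x N) u - min (x N) v| := abs_max_sub_max_le_abs _ _ _
      _ ≤ max |x N - x N| |u - v| := abs_min_sub_min_le_max _ _ _ _
      _ = |u - v| := by simp
  have hq'lip : ∀ i, i < N → ∀ u v : ℝ, |q' i u - q' i v| ≤ Cq i * |u - v| := by
    intro i hi u v
    simp only [hq'def]
    have h1 := hCqspec i hi (clamp u) (hclampmem u) (clamp v) (hclampmem v)
    exact h1.trans (mul_le_mul_of_nonneg_left (hclamplip u v) (hCq0 i))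
  have hq'meas : ∀ i, i < N → Measurable (q' i) := by
    intro i hi
    have hlip : LipschitzWith (Real.toNNReal (Cq i)) (q' i) := by
      apply LipschitzWith.of_dist_le_mul
      intro u v
      rw [Real.dist_eq, Real.dist_eq, Real.coe_toNNReal _ (hCq0 i)]
      exact hq'lip i hi u v
    exact hlip.continuous.measurable
  have hrangene : (Finset.range N).Nonempty := ⟨0, Finset.mem_range.mpr hNpos⟩
  set Dq : ℝ := (Finset.range N).sup' hrangene (fun i => |q i (x 0)| + Cq i * (x N - x 0))
    with hDqdef
  have hq'bd : ∀ i, i < N → ∀ u : ℝ, |q' i u| ≤ Dq := by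
    intro i hi u
    have h1 : |q' i u - q i (x 0)| ≤ Cq i * (x N - x 0) := by
      simp only [hq'def]
      have h2 := hCqspec i hi (clamp u) (hclampmem u) (x 0) ⟨le_rfl, hx0N.le⟩
      refine h2.trans (mul_le_mul_of_nonneg_left ?_ (hCq0 i))
      rw [abs_of_nonneg (sub_nonneg.mpr (hclampmem u).1)]
      linarith [(hclampmem u).2]
    have h3 : |q' i u| ≤ |q i (x 0)| + Cq i * (x N - x 0) := by
      have h4 := abs_sub_abs_le_abs_sub (q' i u) (q i (x 0))
      linarith
    refine h3.trans ?_
    rw [hDqdef]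
    exact Finset.le_sup' (fun i => |q i (x 0)| + Cq i * (x N - x 0)) (Finset.mem_range.mpr hi)
  -- the contraction factor
  set Aα : ℝ := (Finset.range N).sup' hrangene (fun i => |α i|) with hAdef
  have hAαle : ∀ i, i < N → |α i| ≤ Aα := by
    intro i hi
    rw [hAdef]
    exact Finset.le_sup' (fun i => |α i|) (Finset.mem_range.mpr hi)
  have hAα0 : 0 ≤ Aα := le_trans (abs_nonneg _) (hAαle 0 hNpos)
  have hAα1 : Aα < 1 := by
    rw [hAdef]
    exact (Finset.sup'_lt_iff hrangene).mpr (fun i hi => hα i (Finset.mem_range.mp hi))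
  -- bounded measurable version of f
  set Mf : ℝ := max M 0 with hMfdef
  set F : ℝ → ℝ := (Icc (x 0) (x N)).indicator f with hFdef
  have hFeq : ∀ t ∈ Icc (x 0) (x N), F t = f t := fun t ht => indicator_of_mem ht f
  have hFbd : ∀ t, |F t| ≤ Mf := by
    intro t
    by_cases ht : t ∈ Icc (x 0) (x N)
    · rw [hFeq t ht]; exact (hM t ht).trans (le_max_left _ _)
    · rw [hFdef, indicator_of_notMem ht, abs_zero, hMfdef]
      exact le_max_right M 0
  -- measurability
  have hidxmeas : Measurable idx := by
    rw [hidxdef]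
    exact (measurable_from_nat (f := fun n => min (N-1) n)).comp
      (Nat.measurable_floor.comp ((measurable_id.sub_const (x 0)).div_const h))
  have hSmeas : Measurable S := by
    rw [hSdef]
    unfold LmInv
    exact (measurable_id.sub
        ((measurable_from_nat (f := fun n => bC x N n)).comp hidxmeas)).div
      ((measurable_from_nat (f := fun n => aC x N n)).comp hidxmeas)
  set Qf' : ℝ → ℝ := fun t => q' (idx t) (S t) with hQf'def
  have hQf'eq : Qf' = fun t => ∑ i ∈ Finset.range N, if idx t = i then q' i (S t) else 0 := by
    funext t
    rw [Finset.sum_ite_eq, if_pos (Finset.mem_range.mpr (hidxlt t))]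
  have hQf'meas : Measurable Qf' := by
    rw [hQf'eq]
    apply Finset.measurable_sum
    intro i hi
    have hs : MeasurableSet {t : ℝ | idx t = i} := hidxmeas (measurableSet_singleton i)
    exact Measurable.ite hs ((hq'meas i (Finset.mem_range.mp hi)).comp hSmeas) measurable_const
  have hQf'bd : ∀ t, |Qf' t| ≤ Dq := fun t => hq'bd (idx t) (hidxlt t) (S t)
  have hQQ' : ∀ t ∈ Icc (x 0) (x N), Qf t = Qf' t := by
    intro t ht
    rw [(hmaster t ht).2.1, hQf'def]
    simp only [hq'def]
    rw [hclampid _ ((hmaster t ht).2.2)]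
  -- iterates
  have hSIccIter : ∀ K : ℕ, ∀ t ∈ Icc (x 0) (x N), S^[K] t ∈ Icc (x 0) (x N) := by
    intro K
    induction K with
    | zero => intro t ht; simpa using ht
    | succ K ih =>
      intro t ht
      rw [Function.iterate_succ_apply']
      exact hSIcc _ (ih t ht)
  set P : ℕ → ℝ → ℝ := fun K t => ∑ k ∈ Finset.range K,
      (∏ m ∈ Finset.range k, α (idx (S^[m] t))) * Qf' (S^[k] t) with hPdef
  have hPrem : ∀ t ∈ Icc (x 0) (x N), ∀ K : ℕ,
      f t - P K t = (∏ m ∈ Finset.range K, α (idx (S^[m] t))) * f (S^[K] t) := by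
    intro t ht K
    induction K with
    | zero => simp [hPdef]
    | succ K ih =>
      have hu : S^[K] t ∈ Icc (x 0) (x N) := hSIccIter K t ht
      have hm := (hmaster _ hu).1
      rw [hQQ' _ hu] at hm
      have hPsucc : P (K+1) t = P K t
          + (∏ m ∈ Finset.range K, α (idx (S^[m] t))) * Qf' (S^[K] t) := by
        simp only [hPdef]
        rw [Finset.sum_range_succ]
      rw [hPsucc, Finset.prod_range_succ, Function.iterate_succ_apply']
      linear_combination ih + (∏ m ∈ Finset.range K, α (idx (S^[m] t))) * hm
  have hFmeas : Measurable F := by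
    apply measurable_of_tendsto_metrizable
      (f := fun K => (Icc (x 0) (x N)).indicator (P K))
    · intro K
      apply Measurable.indicator ?_ measurableSet_Icc
      simp only [hPdef]
      apply Finset.measurable_sum
      intro k _
      apply Measurable.mul
      · apply Finset.measurable_prod
        intro m _
        exact (measurable_from_nat (f := α)).comp (hidxmeas.comp (hSmeas.iterate m))
      · exact hQf'meas.comp (hSmeas.iterate k)
    · rw [tendsto_pi_nhds]
      intro t
      by_cases ht : t ∈ Icc (x 0) (x N)
      · have hind : ∀ K : ℕ, (Icc (x 0) (x N)).indicator (P K) t = P K t :=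
          fun K => indicator_of_mem ht _
        have hFt : F t = f t := hFeq t ht
        simp only [hind, hFt]
        rw [tendsto_iff_dist_tendsto_zero]
        refine squeeze_zero (fun K => dist_nonneg) (g := fun K => Aα ^ K * Mf) (fun K => ?_) ?_
        · rw [Real.dist_eq, abs_sub_comm, hPrem t ht K, abs_mul]
          refine mul_le_mul ?_ ?_ (abs_nonneg _) (pow_nonneg hAα0 K)
          · calc |∏ m ∈ Finset.range K, α (idx (S^[m] t))|
                = ∏ m ∈ Finset.range K, |α (idx (S^[m] t))| := Finset.abs_prod _ _
              _ ≤ ∏ _m ∈ Finset.range K, Aα :=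
                  Finset.prod_le_prod (fun _ _ => abs_nonneg _) (fun m _ => hAαle _ (hidxlt _))
              _ = Aα ^ K := by simp
          · exact (hM _ (hSIccIter K t ht)).trans (le_max_left _ _)
        · simpa using (tendsto_pow_atTop_nhds_zero_of_lt_one hAα0 hAα1).mul_const Mf
      · have hind : ∀ K : ℕ, (Icc (x 0) (x N)).indicator (P K) t = 0 :=
          fun K => indicator_of_notMem ht _
        have hFt : F t = 0 := indicator_of_notMem ht _
        simp only [hind, hFt]
        exact tendsto_const_nhds
  -- integrability
  have hint_F : ∀ (σ a b : ℝ), IntervalIntegrable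
      (fun t => Complex.exp (((σ * t : ℝ):ℂ) * Complex.I) * ((F t : ℝ):ℂ))
        MeasureTheory.volume a b :=
    fun σ a b => helper_int hFmeas hFbd σ a b
  have hint_Q : ∀ (σ a b : ℝ), IntervalIntegrable
      (fun t => Complex.exp (((σ * t : ℝ):ℂ) * Complex.I) * ((Qf' t : ℝ):ℂ))
        MeasureTheory.volume a b :=
    fun σ a b => helper_int hQf'meas hQf'bd σ a b
  have hint_FL : ∀ (σ : ℝ) (i : ℕ), ∀ a b : ℝ, IntervalIntegrable
      (fun t => Complex.exp (((σ * t : ℝ):ℂ) * Complex.I) * ((F (LmInv x N i t) : ℝ):ℂ))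
        MeasureTheory.volume a b := by
    intro σ i a b
    have hm : Measurable fun t => F (LmInv x N i t) := by
      apply hFmeas.comp
      unfold LmInv
      exact (measurable_id.sub_const _).div_const _
    exact helper_int hm (fun t => hFbd _) σ a b
  -- the three transforms
  set Λh : ℝ → ℂ := fun σ => ((N : ℂ))⁻¹ * ∑ i ∈ Finset.range N,
      ((α i : ℝ) : ℂ) * Complex.exp (((σ * bC x N i : ℝ) : ℂ) * Complex.I) with hΛdef
  set FhF : ℝ → ℂ := fun σ => ∫ t in (x 0)..(x N),
      Complex.exp (((σ * t : ℝ):ℂ) * Complex.I) * ((F t : ℝ):ℂ) with hFhdef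
  set QhF : ℝ → ℂ := fun σ => ∫ t in (x 0)..(x N),
      Complex.exp (((σ * t : ℝ):ℂ) * Complex.I) * ((Qf' t : ℝ):ℂ) with hQhdef
  have hFh_eval : ∀ τ : ℝ, FhF τ = ∫ t in (x 0)..(x N),
      Complex.exp (((τ * t : ℝ):ℂ) * Complex.I) * ((F t : ℝ):ℂ) := fun τ => by rw [hFhdef]
  have hQh_eval : ∀ τ : ℝ, QhF τ = ∫ t in (x 0)..(x N),
      Complex.exp (((τ * t : ℝ):ℂ) * Complex.I) * ((Qf' t : ℝ):ℂ) := fun τ => by rw [hQhdef]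
  have hexp1 : ∀ r : ℝ, ‖Complex.exp ((r : ℂ) * Complex.I)‖ = 1 := fun r => by
    simpa using Complex.norm_exp_ofReal_mul_I r
  have hFhB : ∀ σ, ‖FhF σ‖ ≤ Mf * |x N - x 0| := by
    intro σ
    rw [hFh_eval σ]
    apply intervalIntegral.norm_integral_le_of_norm_le_const
    intro t ht
    rw [norm_mul, hexp1, one_mul, Complex.norm_real, Real.norm_eq_abs]
    exact hFbd t
  have hΛB : ∀ σ, ‖Λh σ‖ ≤ Aα := by
    intro σ
    rw [hΛdef]
    have hNinv : (0:ℝ) ≤ ((N:ℝ))⁻¹ := by positivity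
    calc ‖((N : ℂ))⁻¹ * ∑ i ∈ Finset.range N,
          ((α i : ℝ) : ℂ) * Complex.exp (((σ * bC x N i : ℝ) : ℂ) * Complex.I)‖
        = ((N:ℝ))⁻¹ * ‖∑ i ∈ Finset.range N,
            ((α i : ℝ) : ℂ) * Complex.exp (((σ * bC x N i : ℝ) : ℂ) * Complex.I)‖ := by
          rw [norm_mul, norm_inv, Complex.norm_natCast]
      _ ≤ ((N:ℝ))⁻¹ * ∑ i ∈ Finset.range N,
            ‖((α i : ℝ) : ℂ) * Complex.exp (((σ * bC x N i : ℝ) : ℂ) * Complex.I)‖ :=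
          mul_le_mul_of_nonneg_left (norm_sum_le _ _) hNinv
      _ ≤ ((N:ℝ))⁻¹ * ∑ _i ∈ Finset.range N, Aα := by
          refine mul_le_mul_of_nonneg_left (Finset.sum_le_sum fun i hi => ?_) hNinv
          rw [norm_mul, hexp1, mul_one, Complex.norm_real, Real.norm_eq_abs]
          exact hAαle i (Finset.mem_range.mp hi)
      _ = Aα := by
          rw [Finset.sum_const, Finset.card_range, nsmul_eq_mul]
          field_simp
  -- the key recursion
  have hexpadd : ∀ (σ : ℝ) (i : ℕ), i < N → ∀ u : ℝ,
      Complex.exp (((σ * (aC x N i * u + bC x N i) : ℝ):ℂ) * Complex.I)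
        = Complex.exp (((σ * bC x N i : ℝ):ℂ) * Complex.I)
          * Complex.exp (((σ / (N:ℝ) * u : ℝ):ℂ) * Complex.I) := by
    intro σ i hi u
    rw [← Complex.exp_add]
    congr 1
    rw [haC i hi]
    push_cast
    ring
  have hrec : ∀ σ : ℝ, FhF σ = Λh σ * FhF (σ / (N:ℝ)) + QhF σ := by
    intro σ
    have hterm : ∀ i ∈ Finset.range N,
        (∫ t in (x i)..(x (i+1)),
            Complex.exp (((σ * t : ℝ):ℂ) * Complex.I) * ((F t : ℝ):ℂ))
          = ((α i : ℝ):ℂ) * Complex.exp (((σ * bC x N i : ℝ):ℂ) * Complex.I) * ((N : ℂ))⁻¹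
              * FhF (σ / (N:ℝ))
            + ∫ t in (x i)..(x (i+1)),
                Complex.exp (((σ * t : ℝ):ℂ) * Complex.I) * ((Qf' t : ℝ):ℂ) := by
      intro i hmem
      have hi := Finset.mem_range.mp hmem
      have hstep1 : (∫ t in (x i)..(x (i+1)),
            Complex.exp (((σ * t : ℝ):ℂ) * Complex.I) * ((F t : ℝ):ℂ))
          = ∫ t in (x i)..(x (i+1)),
              (((α i : ℝ):ℂ) * (Complex.exp (((σ * t : ℝ):ℂ) * Complex.I)
                  * ((F (LmInv x N i t) : ℝ):ℂ))
               + Complex.exp (((σ * t : ℝ):ℂ) * Complex.I) * ((Qf' t : ℝ):ℂ)) := by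
        apply intervalIntegral.integral_congr_ae
        have hae : ∀ᵐ t : ℝ ∂MeasureTheory.volume, t ≠ x (i+1) := by
          rw [MeasureTheory.ae_iff]
          simp only [ne_eq, not_not, setOf_eq_eq_singleton]
          exact Real.volume_singleton
        filter_upwards [hae] with t hne hmem2
        rw [uIoc_of_le (hxlt i hi).le] at hmem2
        have htIco : t ∈ Ico (x i) (x (i+1)) := ⟨hmem2.1.le, lt_of_le_of_ne hmem2.2 hne⟩
        have htIcc : t ∈ Icc (x 0) (x N) :=
          ⟨(hx0le i hi.le).trans htIco.1, htIco.2.le.trans (hxleN (i+1) hi)⟩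
        have hu : LmInv x N i t ∈ Ico (x 0) (x N) := hLmInvIco i hi t htIco
        have hfu : f t = α i * f (LmInv x N i t) + q i (LmInv x N i t) := by
          conv_lhs => rw [← hLmLmInv i hi t]
          exact hfe i hi _ hu
        have hQt : Qf' t = q i (LmInv x N i t) := by
          rw [← hQQ' t htIcc]
          exact hQf i hi t htIco
        rw [hFeq t htIcc, hFeq _ (Ico_subset_Icc_self hu), hfu, hQt]
        push_cast
        ring
      rw [hstep1, intervalIntegral.integral_add ((hint_FL σ i _ _).const_mul _)
        (hint_Q σ _ _), intervalIntegral.integral_const_mul]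
      have hsub : (∫ t in (x i)..(x (i+1)),
            Complex.exp (((σ * t : ℝ):ℂ) * Complex.I) * ((F (LmInv x N i t) : ℝ):ℂ))
          = Complex.exp (((σ * bC x N i : ℝ):ℂ) * Complex.I) * (((N : ℂ))⁻¹
              * FhF (σ / (N:ℝ))) := by
        have hcomp := intervalIntegral.integral_comp_mul_add
          (a := x 0) (b := x N)
          (f := fun t => Complex.exp (((σ * t : ℝ):ℂ) * Complex.I)
            * ((F (LmInv x N i t) : ℝ):ℂ))
          (haCne i hi) (bC x N i)
        have he0 : aC x N i * x 0 + bC x N i = x i := hLm0 i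
        have heN : aC x N i * x N + bC x N i = x (i+1) := hLmN i
        rw [he0, heN] at hcomp
        have hptw : ∀ u : ℝ,
            Complex.exp (((σ * (aC x N i * u + bC x N i) : ℝ):ℂ) * Complex.I)
              * ((F (LmInv x N i (aC x N i * u + bC x N i)) : ℝ):ℂ)
            = Complex.exp (((σ * bC x N i : ℝ):ℂ) * Complex.I)
              * (Complex.exp (((σ / (N:ℝ) * u : ℝ):ℂ) * Complex.I) * ((F u : ℝ):ℂ)) := by
          intro u
          rw [hexpadd σ i hi u,
            show aC x N i * u + bC x N i = Lm x N i u from rfl, hLmInvLm i hi u]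
          ring
        rw [intervalIntegral.integral_congr (g := fun u =>
            Complex.exp (((σ * bC x N i : ℝ):ℂ) * Complex.I)
              * (Complex.exp (((σ / (N:ℝ) * u : ℝ):ℂ) * Complex.I) * ((F u : ℝ):ℂ)))
          (fun u _ => hptw u)] at hcomp
        rw [intervalIntegral.integral_const_mul, ← hFh_eval (σ / (N:ℝ))] at hcomp
        have h3 := congrArg (fun z : ℂ => (aC x N i : ℝ) • z) hcomp
        simp only [smul_inv_smul₀ (haCne i hi)] at h3
        rw [← h3, haC i hi, Complex.real_smul]
        push_cast
        ring
      rw [hsub]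
      ring
    have hsplit : FhF σ = ∑ i ∈ Finset.range N,
        ∫ t in (x i)..(x (i+1)),
          Complex.exp (((σ * t : ℝ):ℂ) * Complex.I) * ((F t : ℝ):ℂ) := by
      rw [hFh_eval σ]
      exact (intervalIntegral.sum_integral_adjacent_intervals
        (fun k _ => hint_F σ (x k) (x (k+1)))).symm
    have hQsplit : QhF σ = ∑ i ∈ Finset.range N,
        ∫ t in (x i)..(x (i+1)),
          Complex.exp (((σ * t : ℝ):ℂ) * Complex.I) * ((Qf' t : ℝ):ℂ) := by
      rw [hQh_eval σ]
      exact (intervalIntegral.sum_integral_adjacent_intervals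
        (fun k _ => hint_Q σ (x k) (x (k+1)))).symm
    rw [hsplit, Finset.sum_congr rfl hterm, Finset.sum_add_distrib, ← hQsplit]
    congr 1
    simp only [hΛdef]
    conv_rhs => rw [mul_assoc, Finset.sum_mul, Finset.mul_sum]
    exact Finset.sum_congr rfl (fun i _ => by ring)
  -- final assembly
  have hkey := helper_series (N:ℝ) FhF QhF Λh Aα (Mf * |x N - x 0|) hAα0 hAα1 hFhB hΛB hrec s
  have hgoalF : (∫ t in (x 0)..(x N),
      Complex.exp (((s * t : ℝ):ℂ) * Complex.I) * ((f t : ℝ):ℂ)) = FhF s := by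
    rw [hFh_eval s]
    refine intervalIntegral.integral_congr (fun t ht => ?_)
    rw [uIcc_of_le hx0N.le] at ht
    rw [hFeq t ht]
  have hfn : (fun k : ℕ =>
      (∏ m ∈ Finset.range k, ((N : ℂ))⁻¹ * ∑ i ∈ Finset.range N,
        ((α i : ℝ) : ℂ) * Complex.exp (((s / (N : ℝ) ^ m * bC x N i : ℝ) : ℂ) * Complex.I)) *
      ∫ t in (x 0)..(x N),
        Complex.exp (((s / (N : ℝ) ^ k * t : ℝ) : ℂ) * Complex.I) * ((Qf t : ℝ) : ℂ))
      = fun k : ℕ => (∏ m ∈ Finset.range k, Λh (s / (N:ℝ) ^ m)) * QhF (s / (N:ℝ) ^ k) := by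
    funext k
    congr 1
    rw [hQh_eval]
    refine intervalIntegral.integral_congr (fun t ht => ?_)
    rw [uIcc_of_le hx0N.le] at ht
    rw [hQQ' t ht]
  rw [hgoalF, hfn]
  exact hkey
end

section
/- Let f_1,…,f_N ∈ ℝ be a histogram for the knots x_0 < ⋯ < x_N and set h_i = x_i − x_{i-1}. Assume each q_i is Lipschitz continuous and let f be the bounded fractal function. Then f solves the histopolation problem, i.e. ∫_{x_{i-1}}^{x_i} f(x) dx = h_i f_i for every i = 1,…,N, if and only if ∫_{x_0}^{x_N} q_i(x) dx = (h_i f_i − α_i a_i ∑_{j=1}^N h_j f_j)/a_i for every i = 1,…,N. -/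
open Set

/-- Index of the subinterval containing `y`. -/
noncomputable def indF (x : ℕ → ℝ) (N : ℕ) (y : ℝ) : ℕ :=
  min ((((Finset.range N).filter (fun i => x i ≤ y))).card - 1) (N - 1)

/-- Inverse of the affine map on the piece containing `y`. -/
noncomputable def Gm (x : ℕ → ℝ) (N : ℕ) (y : ℝ) : ℝ :=
  (y - bC x N (indF x N y)) / aC x N (indF x N y)

/-- Iterates of the contraction operator, starting from `0`. -/
noncomputable def gseq (x : ℕ → ℝ) (N : ℕ) (α : ℕ → ℝ) (q : ℕ → ℝ → ℝ) : ℕ → ℝ → ℝ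
  | 0 => fun _ => 0
  | n + 1 => fun y =>
      α (indF x N y) * gseq x N α q n (Gm x N y) +
        q (indF x N y) (max (x 0) (min (Gm x N y) (x N)))

lemma measurable_pick {F : ℕ → ℝ → ℝ} (hF : ∀ i, Measurable (F i))
    {ind : ℝ → ℕ} (hind : Measurable ind) :
    Measurable fun y => F (ind y) y := by
  have h : Measurable fun p : ℝ × ℕ => F p.2 p.1 :=
    measurable_from_prod_countable_left fun i => hF i
  exact h.comp (measurable_id.prodMk hind)

lemma measurable_indF (x : ℕ → ℝ) (N : ℕ) : Measurable (indF x N) := by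
  have h : Measurable fun y => (((Finset.range N).filter (fun i => x i ≤ y))).card := by
    have heq : (fun y => (((Finset.range N).filter (fun i => x i ≤ y))).card)
        = fun y => ∑ i ∈ Finset.range N, if x i ≤ y then 1 else 0 := by
      funext y; rw [Finset.card_filter]
    rw [heq]
    exact Finset.measurable_sum _ fun i _ =>
      Measurable.ite measurableSet_Ici measurable_const measurable_const
  exact (measurable_from_top (f := fun n : ℕ => min (n - 1) (N - 1))).comp h

lemma measurable_Gm (x : ℕ → ℝ) (N : ℕ) : Measurable (Gm x N) :=
  measurable_pick (fun i => (measurable_id.sub measurable_const).div_const _)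
    (measurable_indF x N)

/-- The bounded fractal function `f` solves the histopolation problem
`∫_{x i}^{x (i+1)} f = h i * c i` if and only if
`∫_I q i = (h i c i - α i a i ∑ j h j c j) / a i` for every `i`. -/
theorem stmt18
    (N : ℕ) (hN : 2 ≤ N)
    (x : ℕ → ℝ)
    (hx : ∀ i, i < N → x i < x (i + 1))
    (α : ℕ → ℝ) (hα : ∀ i, i < N → |α i| < 1)
    (q : ℕ → ℝ → ℝ)
    (hq : ∀ i, i < N → ∃ C, ∀ u ∈ Icc (x 0) (x N), ∀ v ∈ Icc (x 0) (x N),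
      |q i u - q i v| ≤ C * |u - v|)
    (f : ℝ → ℝ)
    (hfb : ∃ M, ∀ t ∈ Icc (x 0) (x N), |f t| ≤ M)
    (hfe : ∀ i, i < N → ∀ t ∈ Ico (x 0) (x N), f (Lm x N i t) = α i * f t + q i t)
    (hfeN : f (Lm x N (N - 1) (x N)) = α (N - 1) * f (x N) + q (N - 1) (x N))
    (c : ℕ → ℝ) :
    (∀ i, i < N → ∫ t in (x i)..(x (i + 1)), f t = (x (i + 1) - x i) * c i) ↔
    (∀ i, i < N → ∫ t in (x 0)..(x N), q i t =
      ((x (i + 1) - x i) * c i -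
        α i * aC x N i * ∑ j ∈ Finset.range N, (x (j + 1) - x j) * c j) / aC x N i) := by
  -- monotonicity facts
  have hlt : ∀ j, j ≤ N → ∀ i, i < j → x i < x j := by
    intro j
    induction j with
    | zero => intro _ i hi; omega
    | succ n ih =>
      intro hn i hi
      rcases Nat.lt_succ_iff_lt_or_eq.mp hi with h | h
      · exact lt_trans (ih (by omega) i h) (hx n (by omega))
      · subst h; exact hx i (by omega)
  have hle : ∀ i j, i ≤ j → j ≤ N → x i ≤ x j := by
    intro i j hij hj
    rcases eq_or_lt_of_le hij with h | h
    · exact le_of_eq (by rw [h])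
    · exact (hlt j hj i h).le
  have hx0N : x 0 < x N := hlt N le_rfl 0 (by omega)
  have hden : (0:ℝ) < x N - x 0 := sub_pos.mpr hx0N
  have hdne : x N - x 0 ≠ 0 := ne_of_gt hden
  have haC : ∀ i, i < N → 0 < aC x N i := fun i hi => div_pos (sub_pos.mpr (hx i hi)) hden
  have hL0 : ∀ i : ℕ, aC x N i * x 0 + bC x N i = x i := by
    intro i; unfold aC bC; field_simp; ring
  have hLN : ∀ i : ℕ, aC x N i * x N + bC x N i = x (i + 1) := by
    intro i; unfold aC bC; field_simp; ring
  have hNsub : N - 1 + 1 = N := by omega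
  -- cover lemma
  have hcover : ∀ y : ℝ, x 0 ≤ y → ∀ m : ℕ, y < x m → ∃ i, i < m ∧ x i ≤ y ∧ y < x (i + 1) := by
    intro y hy m
    induction m with
    | zero => intro h; exact absurd (lt_of_le_of_lt hy h) (lt_irrefl _)
    | succ n ih =>
      intro h
      by_cases h' : y < x n
      · obtain ⟨i, hi, h1, h2⟩ := ih h'; exact ⟨i, by omega, h1, h2⟩
      · exact ⟨n, by omega, le_of_not_gt h', h⟩
  -- index facts
  have hfilter : ∀ i, i < N → ∀ y : ℝ, x i ≤ y → y < x (i + 1) →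
      (Finset.range N).filter (fun j => x j ≤ y) = Finset.range (i + 1) := by
    intro i hi y h1 h2
    ext j
    simp only [Finset.mem_filter, Finset.mem_range]
    constructor
    · rintro ⟨hjN, hjy⟩
      by_contra h
      push_neg at h
      have : x (i + 1) ≤ x j := hle (i + 1) j (by omega) (by omega)
      linarith
    · intro hj
      exact ⟨by omega, le_trans (hle j i (by omega) (by omega)) h1⟩
  have hind : ∀ i, i < N → ∀ y : ℝ, x i ≤ y → y < x (i + 1) → indF x N y = i := by
    intro i hi y h1 h2
    unfold indF
    rw [hfilter i hi y h1 h2, Finset.card_range]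
    omega
  have hindN : indF x N (x N) = N - 1 := by
    unfold indF
    have hfl : (Finset.range N).filter (fun j => x j ≤ x N) = Finset.range N := by
      apply Finset.filter_true_of_mem
      intro j hj
      exact hle j N (le_of_lt (Finset.mem_range.mp hj)) le_rfl
    rw [hfl, Finset.card_range]
    omega
  have hindle : ∀ y : ℝ, indF x N y ≤ N - 1 := fun y => min_le_right _ _
  -- structural facts about f, Gm, indF on Icc
  have hstruct : ∀ y ∈ Icc (x 0) (x N), indF x N y < N ∧ Gm x N y ∈ Icc (x 0) (x N) ∧
      f y = α (indF x N y) * f (Gm x N y) + q (indF x N y) (Gm x N y) := by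
    intro y hy
    rcases eq_or_lt_of_le hy.2 with hEq | hLt
    · have h5 := hLN (N - 1)
      rw [hNsub] at h5
      have hG : Gm x N (x N) = x N := by
        unfold Gm
        rw [hindN, div_eq_iff (ne_of_gt (haC (N - 1) (by omega)))]
        linarith
      have hfN : f (x N) = α (N - 1) * f (x N) + q (N - 1) (x N) := by
        have hL : Lm x N (N - 1) (x N) = x N := h5
        rw [hL] at hfeN
        exact hfeN
      rw [hEq]
      exact ⟨by rw [hindN]; omega, by rw [hG]; exact ⟨hx0N.le, le_rfl⟩,
        by rw [hindN, hG]; exact hfN⟩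
    · obtain ⟨i, hiN, h1, h2⟩ := hcover y hy.1 N hLt
      have hi' := hind i hiN y h1 h2
      have haCi := haC i hiN
      have hGm : Gm x N y = (y - bC x N i) / aC x N i := by unfold Gm; rw [hi']
      have hmem : Gm x N y ∈ Ico (x 0) (x N) := by
        rw [hGm]
        constructor
        · rw [le_div_iff₀ haCi]
          nlinarith [hL0 i]
        · rw [div_lt_iff₀ haCi]
          nlinarith [hLN i]
      have hLG : Lm x N i (Gm x N y) = y := by
        unfold Lm
        rw [hGm]
        have hmul : aC x N i * ((y - bC x N i) / aC x N i) = y - bC x N i := by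
          field_simp
        rw [hmul]; ring
      refine ⟨by rw [hi']; exact hiN, ⟨hmem.1, hmem.2.le⟩, ?_⟩
      rw [hi']
      have h3 := hfe i hiN (Gm x N y) hmem
      rw [hLG] at h3
      exact h3
  have hclamp : ∀ z ∈ Icc (x 0) (x N), max (x 0) (min z (x N)) = z := by
    intro z hz; rw [min_eq_left hz.2, max_eq_right hz.1]
  -- bound on f
  obtain ⟨M0, hM0⟩ := hfb
  set M := max M0 0 with hMdef
  have hM : ∀ t ∈ Icc (x 0) (x N), |f t| ≤ M := fun t ht => le_trans (hM0 t ht) (le_max_left _ _)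
  have hMnn : (0:ℝ) ≤ M := le_max_right _ _
  -- contraction ratio
  have hne : (Finset.range N).Nonempty := ⟨0, Finset.mem_range.mpr (by omega)⟩
  set r := (Finset.range N).sup' hne (fun i => |α i|) with hrdef
  have hr1 : r < 1 := (Finset.sup'_lt_iff hne).mpr fun i hi => hα i (Finset.mem_range.mp hi)
  have hr0 : (0:ℝ) ≤ r :=
    le_trans (abs_nonneg (α 0))
      (Finset.le_sup' (fun i => |α i|) (Finset.mem_range.mpr (show 0 < N by omega)))
  have hrle : ∀ i, i < N → |α i| ≤ r :=
    fun i hi => Finset.le_sup' (fun i => |α i|) (Finset.mem_range.mpr hi)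
  -- the estimate
  have hest : ∀ n, ∀ y ∈ Icc (x 0) (x N), |f y - gseq x N α q n y| ≤ M * r ^ n := by
    intro n
    induction n with
    | zero =>
      intro y hy
      simpa [gseq] using hM y hy
    | succ n ih =>
      intro y hy
      obtain ⟨hiN, hGmem, hfy⟩ := hstruct y hy
      have hgs : gseq x N α q (n + 1) y =
          α (indF x N y) * gseq x N α q n (Gm x N y) + q (indF x N y) (Gm x N y) := by
        simp only [gseq]
        rw [hclamp _ hGmem]
      rw [hgs, hfy]
      have heq : α (indF x N y) * f (Gm x N y) + q (indF x N y) (Gm x N y) -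
          (α (indF x N y) * gseq x N α q n (Gm x N y) + q (indF x N y) (Gm x N y)) =
          α (indF x N y) * (f (Gm x N y) - gseq x N α q n (Gm x N y)) := by ring
      rw [heq, abs_mul]
      calc |α (indF x N y)| * |f (Gm x N y) - gseq x N α q n (Gm x N y)|
          ≤ r * (M * r ^ n) :=
            mul_le_mul (hrle _ hiN) (ih _ hGmem) (abs_nonneg _) hr0
        _ = M * r ^ (n + 1) := by ring
  -- continuity of q on Icc
  have hqcont : ∀ i, i < N → ContinuousOn (q i) (Icc (x 0) (x N)) := by
    intro i hi
    obtain ⟨C, hC⟩ := hq i hi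
    refine (LipschitzOnWith.of_dist_le_mul (K := Real.toNNReal C) ?_).continuousOn
    intro u hu v hv
    rw [Real.dist_eq, Real.dist_eq]
    calc |q i u - q i v| ≤ C * |u - v| := hC u hu v hv
      _ ≤ Real.toNNReal C * |u - v| :=
        mul_le_mul_of_nonneg_right (Real.le_coe_toNNReal C) (abs_nonneg _)
  have hclampcont : Continuous fun z : ℝ => max (x 0) (min z (x N)) :=
    continuous_const.max (continuous_id.min continuous_const)
  have hclampmem : ∀ z : ℝ, max (x 0) (min z (x N)) ∈ Icc (x 0) (x N) := fun z =>
    ⟨le_max_left _ _, max_le hx0N.le (min_le_right _ _)⟩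
  have hQmeas : ∀ i, i < N → Measurable fun z : ℝ => q i (max (x 0) (min z (x N))) := by
    intro i hi
    exact ((hqcont i hi).comp_continuous hclampcont hclampmem).measurable
  have hGmeas : Measurable (Gm x N) := measurable_Gm x N
  have hindmeas := measurable_indF x N
  -- measurability of the iterates
  have hgmeas : ∀ n, Measurable (gseq x N α q n) := by
    intro n
    induction n with
    | zero =>
      simp only [gseq]
      exact measurable_const
    | succ n ih =>
      simp only [gseq]
      have h1 : Measurable fun y => α (indF x N y) :=
        (measurable_from_top (f := α)).comp hindmeas
      have h2 : Measurable fun y => gseq x N α q n (Gm x N y) := ih.comp hGmeas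
      have h3 : Measurable fun y => q (indF x N y) (max (x 0) (min (Gm x N y) (x N))) := by
        have hF : ∀ i : ℕ,
            Measurable fun y => q (min i (N - 1)) (max (x 0) (min (Gm x N y) (x N))) := by
          intro i
          exact (hQmeas (min i (N - 1)) (by omega)).comp hGmeas
        have heq : (fun y => q (indF x N y) (max (x 0) (min (Gm x N y) (x N)))) =
            fun y => q (min (indF x N y) (N - 1)) (max (x 0) (min (Gm x N y) (x N))) := by
          funext y; rw [min_eq_left (hindle y)]
        rw [heq]
        exact measurable_pick hF hindmeas
      exact (h1.mul h2).add h3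
  -- a.e. measurability of f on Icc
  have hfaem : AEMeasurable f (MeasureTheory.volume.restrict (Icc (x 0) (x N))) := by
    apply aemeasurable_of_tendsto_metrizable_ae Filter.atTop
      (fun n => (hgmeas n).aemeasurable)
    filter_upwards [MeasureTheory.ae_restrict_mem measurableSet_Icc] with y hy
    rw [tendsto_iff_dist_tendsto_zero]
    have htend : Filter.Tendsto (fun n : ℕ => M * r ^ n) Filter.atTop (nhds 0) := by
      have := (tendsto_pow_atTop_nhds_zero_of_lt_one hr0 hr1).const_mul M
      simpa using this
    refine squeeze_zero (fun n => dist_nonneg) (fun n => ?_) htend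
    rw [Real.dist_eq, abs_sub_comm]
    exact hest n y hy
  -- integrability of f
  have hIcc : MeasureTheory.IntegrableOn f (Icc (x 0) (x N)) := by
    refine MeasureTheory.Integrable.mono' (g := fun _ => M)
      (MeasureTheory.integrableOn_const measure_Icc_lt_top.ne)
      (aestronglyMeasurable_iff_aemeasurable.mpr hfaem) ?_
    filter_upwards [MeasureTheory.ae_restrict_mem measurableSet_Icc] with y hy
    rw [Real.norm_eq_abs]
    exact hM y hy
  have hsubint : ∀ a b : ℝ, a ∈ Icc (x 0) (x N) → b ∈ Icc (x 0) (x N) →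
      IntervalIntegrable f MeasureTheory.volume a b := by
    intro a b ha hb
    rw [intervalIntegrable_iff]
    apply hIcc.mono_set
    intro t ht
    rcases ht with ⟨ht1, ht2⟩
    constructor
    · exact le_trans (le_min ha.1 hb.1) ht1.le
    · exact le_trans ht2 (max_le ha.2 hb.2)
  have hmemIcc : ∀ i, i ≤ N → x i ∈ Icc (x 0) (x N) := fun i hi =>
    ⟨hle 0 i (by omega) hi, hle i N hi le_rfl⟩
  have hfint : ∀ i, i < N → IntervalIntegrable f MeasureTheory.volume (x i) (x (i + 1)) :=
    fun i hi => hsubint _ _ (hmemIcc i (by omega)) (hmemIcc (i + 1) (by omega))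
  have hfintI : IntervalIntegrable f MeasureTheory.volume (x 0) (x N) :=
    hsubint _ _ (hmemIcc 0 (by omega)) (hmemIcc N le_rfl)
  have hqint : ∀ i, i < N → IntervalIntegrable (q i) MeasureTheory.volume (x 0) (x N) := by
    intro i hi
    apply ContinuousOn.intervalIntegrable
    rw [uIcc_of_le hx0N.le]
    exact hqcont i hi
  -- the key identity
  have key : ∀ i, i < N → (∫ t in (x i)..(x (i + 1)), f t) =
      aC x N i * (α i * (∫ t in (x 0)..(x N), f t) + ∫ t in (x 0)..(x N), q i t) := by
    intro i hi
    have haCi := haC i hi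
    have h1 := intervalIntegral.integral_comp_mul_add (a := x 0) (b := x N) f
      (ne_of_gt haCi) (bC x N i)
    rw [hL0 i, hLN i] at h1
    have h2 : (∫ t in (x 0)..(x N), f (aC x N i * t + bC x N i)) =
        ∫ t in (x 0)..(x N), (α i * f t + q i t) := by
      apply intervalIntegral.integral_congr_ae
      have hne' : ∀ᵐ t : ℝ, t ≠ x N := by
        rw [MeasureTheory.ae_iff]
        have hset : {t : ℝ | ¬ t ≠ x N} = {x N} := by ext t; simp
        rw [hset]
        exact MeasureTheory.measure_singleton _
      filter_upwards [hne'] with t ht hmem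
      rw [uIoc_of_le hx0N.le] at hmem
      have htm : t ∈ Ico (x 0) (x N) := ⟨hmem.1.le, lt_of_le_of_ne hmem.2 ht⟩
      have := hfe i hi t htm
      simpa [Lm] using this
    have h3 : (∫ t in (x 0)..(x N), (α i * f t + q i t)) =
        α i * (∫ t in (x 0)..(x N), f t) + ∫ t in (x 0)..(x N), q i t := by
      rw [intervalIntegral.integral_add (hfintI.const_mul _) (hqint i hi),
        intervalIntegral.integral_const_mul]
    rw [h2, h3] at h1
    rw [smul_eq_mul] at h1
    have hmul : aC x N i * (α i * (∫ t in (x 0)..(x N), f t) + ∫ t in (x 0)..(x N), q i t) =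
        aC x N i * ((aC x N i)⁻¹ * ∫ t in (x i)..(x (i + 1)), f t) := by rw [h1]
    rw [← mul_assoc, mul_inv_cancel₀ (ne_of_gt haCi), one_mul] at hmul
    exact hmul.symm
  have hsumJ : ∑ k ∈ Finset.range N, (∫ t in (x k)..(x (k + 1)), f t) =
      ∫ t in (x 0)..(x N), f t :=
    intervalIntegral.sum_integral_adjacent_intervals fun k hk => hfint k hk
  have hsumA : ∑ i ∈ Finset.range N, aC x N i = 1 := by
    simp only [aC]
    rw [← Finset.sum_div, Finset.sum_range_sub, div_self hdne]
  constructor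
  · intro H i hi
    have hF : (∫ t in (x 0)..(x N), f t) =
        ∑ j ∈ Finset.range N, (x (j + 1) - x j) * c j := by
      rw [← hsumJ]
      exact Finset.sum_congr rfl fun j hj => H j (Finset.mem_range.mp hj)
    have hk := key i hi
    rw [H i hi, hF] at hk
    rw [eq_div_iff (ne_of_gt (haC i hi))]
    linear_combination -hk
  · intro H
    set F := ∫ t in (x 0)..(x N), f t with hFdef
    set S := ∑ j ∈ Finset.range N, (x (j + 1) - x j) * c j with hSdef
    have hK : ∀ i, i < N → aC x N i * (∫ t in (x 0)..(x N), q i t) =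
        (x (i + 1) - x i) * c i - α i * aC x N i * S := by
      intro i hi
      rw [H i hi, mul_comm, div_mul_cancel₀ _ (ne_of_gt (haC i hi))]
    have hA1 : ∑ i ∈ Finset.range N, α i * aC x N i < 1 := by
      have h1 : ∀ i ∈ Finset.range N, α i * aC x N i < aC x N i := by
        intro i hi'
        have hi := Finset.mem_range.mp hi'
        have hαi := hα i hi
        have hai := haC i hi
        nlinarith [le_abs_self (α i)]
      calc ∑ i ∈ Finset.range N, α i * aC x N i
          < ∑ i ∈ Finset.range N, aC x N i := Finset.sum_lt_sum_of_nonempty hne h1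
        _ = 1 := hsumA
    set A := ∑ i ∈ Finset.range N, α i * aC x N i with hAdef
    have hFeq : F = A * F + S - A * S := by
      calc F = ∑ k ∈ Finset.range N, (∫ t in (x k)..(x (k + 1)), f t) := hsumJ.symm
        _ = ∑ k ∈ Finset.range N,
            (α k * aC x N k * F + ((x (k + 1) - x k) * c k - α k * aC x N k * S)) := by
          apply Finset.sum_congr rfl
          intro k hk'
          have hk := Finset.mem_range.mp hk'
          rw [key k hk, mul_add, hK k hk]
          ring
        _ = A * F + S - A * S := by
          rw [Finset.sum_add_distrib, Finset.sum_sub_distrib, ← Finset.sum_mul,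
            ← Finset.sum_mul, ← hAdef, ← hSdef]
          ring
    have hzero : (1 - A) * (F - S) = 0 := by linear_combination hFeq
    have hFS : F = S := by
      rcases mul_eq_zero.mp hzero with h | h
      · linarith
      · linarith
    intro i hi
    have hk := key i hi
    rw [hFS] at hk
    linear_combination hk + hK i hi
end
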